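/- arXiv:1812.05924 — 12 statements merged into one kernel-verified Lean document; each statement's English description precedes it below -/
import Mathlib

section
/- Let α > 0, let λ be a real number, and let w : ℝ → ℂ be four times continuously differentiable on [0, α] with w'(0) = 0. Set h(x) = -λ²·w(x) + w''''(x). Then Re ∫₀^α h(x) · x · conj(w'(x)) dx = (λ²/2)·∫₀^α |w(x)|² dx - (λ²·α/2)·|w(α)|² + Re[(α·w'''(α) - w''(α))·conj(w'(α))] + (3/2)·∫₀^α |w''(x)|² dx - (α/2)·|w''(α)|². -/
open Complex intervalIntegral

lemma deriv_abs_sq {g g' : ℝ → ℂ} {x : ℝ} (hg : HasDerivAt g (g' x) x) :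
    HasDerivAt (fun t => ‖g t‖^2) (2 * (g x * (starRingEnd ℂ) (g' x)).re) x := by
  have h1 : HasDerivAt (fun t => g t * star (g t))
      (g' x * star (g x) + g x * star (g' x)) x := hg.mul hg.star
  have h2 := Complex.reCLM.hasFDerivAt.comp_hasDerivAt x h1
  have heq : (⇑Complex.reCLM ∘ fun t => g t * star (g t))
      = fun t => ‖g t‖^2 := by
    funext t
    have hst : g t * star (g t) = ((‖g t‖^2 : ℝ) : ℂ) := by
      rw [Complex.sq_norm, ← Complex.mul_conj]; rfl
    simp only [Function.comp_apply, Complex.reCLM_apply, hst, Complex.ofReal_re]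
  rw [heq] at h2
  refine h2.congr_deriv ?_
  simp only [Complex.reCLM_apply, ← starRingEnd_apply, Complex.add_re, Complex.mul_re,
    Complex.conj_re, Complex.conj_im]
  ring

lemma L1 {α : ℝ} (hα : (0:ℝ) ≤ α) {g g' : ℝ → ℂ}
    (hg : ∀ x ∈ Set.Icc (0:ℝ) α, HasDerivAt g (g' x) x)
    (hgc : ContinuousOn g (Set.Icc (0:ℝ) α))
    (hg' : ContinuousOn g' (Set.Icc (0:ℝ) α)) :
    ∫ x in (0:ℝ)..α, x * (g x * (starRingEnd ℂ) (g' x)).re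
      = α/2 * ‖g α‖^2 - 1/2 * ∫ x in (0:ℝ)..α, ‖g x‖^2 := by
  have hIcc : Set.uIcc (0:ℝ) α = Set.Icc 0 α := Set.uIcc_of_le hα
  have hu : ∀ x ∈ Set.uIcc (0:ℝ) α, HasDerivAt (fun t : ℝ => t) (1:ℝ) x :=
    fun x _ => hasDerivAt_id x
  have hv : ∀ x ∈ Set.uIcc (0:ℝ) α,
      HasDerivAt (fun t => ‖g t‖^2) (2 * (g x * (starRingEnd ℂ) (g' x)).re) x := by
    intro x hx; exact deriv_abs_sq (hg x (hIcc ▸ hx))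
  have hint : IntervalIntegrable (fun x => 2 * (g x * (starRingEnd ℂ) (g' x)).re)
      MeasureTheory.volume 0 α := by
    apply ContinuousOn.intervalIntegrable
    rw [hIcc]
    exact continuousOn_const.mul (Complex.continuous_re.comp_continuousOn
      (hgc.mul (Complex.continuous_conj.comp_continuousOn hg')))
  have key := intervalIntegral.integral_mul_deriv_eq_deriv_mul hu hv
    (continuous_const.intervalIntegrable _ _) hint
  simp only [one_mul, zero_mul, sub_zero] at key
  have h2 : (∫ x in (0:ℝ)..α, x * (2 * (g x * (starRingEnd ℂ) (g' x)).re))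
      = 2 * ∫ x in (0:ℝ)..α, x * (g x * (starRingEnd ℂ) (g' x)).re := by
    rw [← intervalIntegral.integral_const_mul]
    congr 1; funext x; ring
  rw [h2] at key
  linarith

/-- Multiplier identity for the beam resolvent equation `-λ²w + w'''' = h`
multiplied by `x · conj w'` on `(0, α)`, with boundary condition `w'(0) = 0`. -/
theorem stmt_0 (α lam : ℝ) (hα : 0 < α)
    (w w' w'' w''' w'''' : ℝ → ℂ)
    (hw1 : ∀ x ∈ Set.Icc (0:ℝ) α, HasDerivAt w (w' x) x)
    (hw2 : ∀ x ∈ Set.Icc (0:ℝ) α, HasDerivAt w' (w'' x) x)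
    (hw3 : ∀ x ∈ Set.Icc (0:ℝ) α, HasDerivAt w'' (w''' x) x)
    (hw4 : ∀ x ∈ Set.Icc (0:ℝ) α, HasDerivAt w''' (w'''' x) x)
    (hcont : ContinuousOn w'''' (Set.Icc (0:ℝ) α))
    (hbc : w' 0 = 0)
    (h : ℝ → ℂ)
    (hh : ∀ x, h x = -(lam:ℂ)^2 * w x + w'''' x) :
    (∫ x in (0:ℝ)..α, h x * (x:ℂ) * (starRingEnd ℂ) (w' x)).re
      = lam^2/2 * (∫ x in (0:ℝ)..α, ‖w x‖^2)
        - lam^2 * α/2 * ‖w α‖^2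
        + (((α:ℂ) * w''' α - w'' α) * (starRingEnd ℂ) (w' α)).re
        + 3/2 * (∫ x in (0:ℝ)..α, ‖w'' x‖^2)
        - α/2 * ‖w'' α‖^2 := by
  have h0α : (0:ℝ) ≤ α := hα.le
  have hIcc : Set.uIcc (0:ℝ) α = Set.Icc 0 α := Set.uIcc_of_le h0α
  -- continuity
  have c0 : ContinuousOn w (Set.Icc 0 α) := fun x hx => (hw1 x hx).continuousAt.continuousWithinAt
  have c1 : ContinuousOn w' (Set.Icc 0 α) := fun x hx => (hw2 x hx).continuousAt.continuousWithinAt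
  have c2 : ContinuousOn w'' (Set.Icc 0 α) := fun x hx => (hw3 x hx).continuousAt.continuousWithinAt
  have c3 : ContinuousOn w''' (Set.Icc 0 α) := fun x hx => (hw4 x hx).continuousAt.continuousWithinAt
  have cc1 : ContinuousOn (fun x => (starRingEnd ℂ) (w' x)) (Set.Icc 0 α) :=
    Complex.continuous_conj.comp_continuousOn c1
  have cc2 : ContinuousOn (fun x => (starRingEnd ℂ) (w'' x)) (Set.Icc 0 α) :=
    Complex.continuous_conj.comp_continuousOn c2
  have cid : ContinuousOn (fun x : ℝ => (x:ℂ)) (Set.Icc 0 α) :=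
    Complex.continuous_ofReal.continuousOn
  have II : ∀ {f : ℝ → ℂ}, ContinuousOn f (Set.Icc 0 α) →
      IntervalIntegrable f MeasureTheory.volume 0 α := fun {f} hf =>
    ContinuousOn.intervalIntegrable (by rwa [hIcc])
  -- integrability
  have intA : IntervalIntegrable (fun x => (x:ℂ) * (w x * (starRingEnd ℂ) (w' x)))
      MeasureTheory.volume 0 α := II (cid.mul (c0.mul cc1))
  have intB : IntervalIntegrable (fun x => ((x:ℂ) * (starRingEnd ℂ) (w' x)) * w'''' x)
      MeasureTheory.volume 0 α := II ((cid.mul cc1).mul hcont)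
  have intc : IntervalIntegrable (fun x => (starRingEnd ℂ) (w' x) * w''' x)
      MeasureTheory.volume 0 α := II (cc1.mul c3)
  have intd : IntervalIntegrable (fun x => (x:ℂ) * (w''' x * (starRingEnd ℂ) (w'' x)))
      MeasureTheory.volume 0 α := II (cid.mul (c3.mul cc2))
  -- derivative of conj w'
  have hconjd : ∀ x ∈ Set.uIcc (0:ℝ) α,
      HasDerivAt (fun t => (starRingEnd ℂ) (w' t)) ((starRingEnd ℂ) (w'' x)) x := by
    intro x hx
    rw [hIcc] at hx
    simpa only [← starRingEnd_apply] using (hw2 x hx).star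
  -- derivative of x * conj w'
  have hu : ∀ x ∈ Set.uIcc (0:ℝ) α,
      HasDerivAt (fun t : ℝ => (t:ℂ) * (starRingEnd ℂ) (w' t))
        ((starRingEnd ℂ) (w' x) + (x:ℂ) * (starRingEnd ℂ) (w'' x)) x := by
    intro x hx
    have hid : HasDerivAt (fun t : ℝ => (t:ℂ)) 1 x := by
      exact Complex.ofRealCLM.hasDerivAt (x := x)
    have := hid.mul (hconjd x hx)
    rw [one_mul] at this; exact this
  -- IBP 1
  have ibp1 : (∫ x in (0:ℝ)..α, ((x:ℂ) * (starRingEnd ℂ) (w' x)) * w'''' x)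
      = (α:ℂ) * (starRingEnd ℂ) (w' α) * w''' α
        - ∫ x in (0:ℝ)..α, ((starRingEnd ℂ) (w' x) + (x:ℂ) * (starRingEnd ℂ) (w'' x)) * w''' x := by
    have key := intervalIntegral.integral_mul_deriv_eq_deriv_mul hu
      (fun x hx => hw4 x (hIcc ▸ hx))
      (II (cc1.add (cid.mul cc2))) (II hcont)
    simpa using key
  -- IBP 2
  have ibp2 : (∫ x in (0:ℝ)..α, (starRingEnd ℂ) (w' x) * w''' x)
      = (starRingEnd ℂ) (w' α) * w'' α - ∫ x in (0:ℝ)..α, (starRingEnd ℂ) (w'' x) * w'' x := by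
    have key := intervalIntegral.integral_mul_deriv_eq_deriv_mul hconjd
      (fun x hx => hw3 x (hIcc ▸ hx)) (II cc2) (II c3)
    simpa [hbc] using key
  -- real value of ∫ conj w'' * w''
  have e5 : (∫ x in (0:ℝ)..α, (starRingEnd ℂ) (w'' x) * w'' x)
      = ((∫ x in (0:ℝ)..α, ‖w'' x‖^2 : ℝ) : ℂ) := by
    rw [← intervalIntegral.integral_ofReal]
    congr 1; funext x
    rw [mul_comm, Complex.mul_conj, Complex.sq_norm]
  -- L1 applications
  have e4 := L1 h0α hw1 c0 c1
  have e3 := L1 h0α hw3 c2 c3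
  -- splitting
  have split : (∫ x in (0:ℝ)..α, h x * (x:ℂ) * (starRingEnd ℂ) (w' x))
      = (-(lam:ℂ)^2) * (∫ x in (0:ℝ)..α, (x:ℂ) * (w x * (starRingEnd ℂ) (w' x)))
        + ∫ x in (0:ℝ)..α, ((x:ℂ) * (starRingEnd ℂ) (w' x)) * w'''' x := by
    rw [← intervalIntegral.integral_const_mul,
      ← intervalIntegral.integral_add (intA.const_mul _) intB]
    congr 1; funext x; rw [hh]; ring
  have split2 : (∫ x in (0:ℝ)..α, ((starRingEnd ℂ) (w' x) + (x:ℂ) * (starRingEnd ℂ) (w'' x)) * w''' x)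
      = (∫ x in (0:ℝ)..α, (starRingEnd ℂ) (w' x) * w''' x)
        + ∫ x in (0:ℝ)..α, (x:ℂ) * (w''' x * (starRingEnd ℂ) (w'' x)) := by
    rw [← intervalIntegral.integral_add intc intd]
    congr 1; funext x; ring
  -- re of the integrals
  have hA : (∫ x in (0:ℝ)..α, (x:ℂ) * (w x * (starRingEnd ℂ) (w' x))).re
      = ∫ x in (0:ℝ)..α, x * (w x * (starRingEnd ℂ) (w' x)).re := by
    rw [show (∫ x in (0:ℝ)..α, (x:ℂ) * (w x * (starRingEnd ℂ) (w' x))).re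
        = Complex.reCLM (∫ x in (0:ℝ)..α, (x:ℂ) * (w x * (starRingEnd ℂ) (w' x))) from rfl,
      ← ContinuousLinearMap.intervalIntegral_comp_comm _ intA]
    congr 1; funext x
    simp [Complex.re_ofReal_mul]
  have hB : (∫ x in (0:ℝ)..α, (x:ℂ) * (w''' x * (starRingEnd ℂ) (w'' x))).re
      = ∫ x in (0:ℝ)..α, x * (w'' x * (starRingEnd ℂ) (w''' x)).re := by
    rw [show (∫ x in (0:ℝ)..α, (x:ℂ) * (w''' x * (starRingEnd ℂ) (w'' x))).re
        = Complex.reCLM (∫ x in (0:ℝ)..α, (x:ℂ) * (w''' x * (starRingEnd ℂ) (w'' x))) from rfl,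
      ← ContinuousLinearMap.intervalIntegral_comp_comm _ intd]
    congr 1; funext x
    simp only [Complex.reCLM_apply, Complex.re_ofReal_mul, Complex.mul_re, Complex.mul_im,
      Complex.conj_re, Complex.conj_im, Complex.ofReal_re, Complex.ofReal_im]
    ring
  -- assemble
  have hfirst : ((-(lam:ℂ)^2) * ∫ x in (0:ℝ)..α, (x:ℂ) * (w x * (starRingEnd ℂ) (w' x))).re
      = -lam^2 * ∫ x in (0:ℝ)..α, x * (w x * (starRingEnd ℂ) (w' x)).re := by
    rw [show (-(lam:ℂ)^2) = ((-lam^2 : ℝ) : ℂ) by push_cast; ring,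
      Complex.re_ofReal_mul, hA]
  have hbd : (((α:ℂ) * w''' α - w'' α) * (starRingEnd ℂ) (w' α)).re
      = ((α:ℂ) * (starRingEnd ℂ) (w' α) * w''' α).re
        - ((starRingEnd ℂ) (w' α) * w'' α).re := by
    rw [sub_mul, Complex.sub_re]
    congr 2 <;> ring
  rw [split, Complex.add_re, hfirst, ibp1, Complex.sub_re, split2, Complex.add_re, ibp2,
    Complex.sub_re, e5, hB, e4, e3, hbd, Complex.ofReal_re]
  ring
end

section
/- Let β < l ≤ L be real numbers, let λ be a real number, and let w : ℝ → ℂ be four times continuously differentiable on [β, l]. Set h(x) = -λ²·w(x) + w''''(x). Then Re ∫_β^l h(x)·(L - x)·conj(w'(x)) dx = -(λ²/2)·∫_β^l |w(x)|² dx + (λ²/2)·[(L - β)·|w(β)|² - (L - l)·|w(l)|²] + Re[((L - l)·w'''(l) + w''(l))·conj(w'(l))] - Re[((L - β)·w'''(β) + w''(β))·conj(w'(β))] - (3/2)·∫_β^l |w''(x)|² dx + ((L - β)/2)·|w''(β)|² - ((L - l)/2)·|w''(l)|². -/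
open Complex intervalIntegral MeasureTheory

/-- Multiplier identity for the beam resolvent equation `-λ²w + w'''' = h`
multiplied by `(L - x) · conj w'` on `(β, l)` with `β < l ≤ L`. -/
theorem stmt_1 (β l L lam : ℝ) (hβl : β < l) (hlL : l ≤ L)
    (w w' w'' w''' w'''' : ℝ → ℂ)
    (hw1 : ∀ x ∈ Set.Icc β l, HasDerivAt w (w' x) x)
    (hw2 : ∀ x ∈ Set.Icc β l, HasDerivAt w' (w'' x) x)
    (hw3 : ∀ x ∈ Set.Icc β l, HasDerivAt w'' (w''' x) x)
    (hw4 : ∀ x ∈ Set.Icc β l, HasDerivAt w''' (w'''' x) x)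
    (hcont : ContinuousOn w'''' (Set.Icc β l))
    (h : ℝ → ℂ)
    (hh : ∀ x, h x = -(lam:ℂ)^2 * w x + w'''' x) :
    (∫ x in β..l, h x * ((L:ℂ) - (x:ℂ)) * (starRingEnd ℂ) (w' x)).re
      = -(lam^2/2) * (∫ x in β..l, ‖w x‖^2)
        + lam^2/2 * ((L - β) * ‖w β‖^2 - (L - l) * ‖w l‖^2)
        + ((((L:ℂ) - (l:ℂ)) * w''' l + w'' l) * (starRingEnd ℂ) (w' l)).re
        - ((((L:ℂ) - (β:ℂ)) * w''' β + w'' β) * (starRingEnd ℂ) (w' β)).re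
        - 3/2 * (∫ x in β..l, ‖w'' x‖^2)
        + (L - β)/2 * ‖w'' β‖^2
        - (L - l)/2 * ‖w'' l‖^2 := by
  have hle : β ≤ l := hβl.le
  have huIcc : Set.uIcc β l = Set.Icc β l := Set.uIcc_of_le hle
  -- continuity
  have cw : ContinuousOn w (Set.Icc β l) := fun x hx => (hw1 x hx).continuousAt.continuousWithinAt
  have cw1 : ContinuousOn w' (Set.Icc β l) := fun x hx => (hw2 x hx).continuousAt.continuousWithinAt
  have cw2 : ContinuousOn w'' (Set.Icc β l) := fun x hx => (hw3 x hx).continuousAt.continuousWithinAt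
  have cw3 : ContinuousOn w''' (Set.Icc β l) := fun x hx => (hw4 x hx).continuousAt.continuousWithinAt
  have cconj : ∀ {f : ℝ → ℂ}, ContinuousOn f (Set.Icc β l) →
      ContinuousOn (fun x => (starRingEnd ℂ) (f x)) (Set.Icc β l) :=
    fun hf => Complex.continuous_conj.comp_continuousOn hf
  have cL : ContinuousOn (fun x : ℝ => (L:ℂ) - (x:ℂ)) (Set.Icc β l) :=
    (continuous_const.sub Complex.continuous_ofReal).continuousOn
  have hInt : ∀ {f : ℝ → ℂ}, ContinuousOn f (Set.Icc β l) → IntervalIntegrable f volume β l := by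
    intro f hf; rw [← huIcc] at hf; exact hf.intervalIntegrable
  have hIntR : ∀ {f : ℝ → ℝ}, ContinuousOn f (Set.Icc β l) → IntervalIntegrable f volume β l := by
    intro f hf; rw [← huIcc] at hf; exact hf.intervalIntegrable
  have hre : ∀ {f : ℝ → ℂ}, IntervalIntegrable f volume β l →
      (∫ x in β..l, f x).re = ∫ x in β..l, (f x).re := fun hf =>
    by simpa using (Complex.reCLM.intervalIntegral_comp_comm hf).symm
  have hdconj : ∀ {f : ℝ → ℂ} {c : ℂ} (x : ℝ), HasDerivAt f c x →
      HasDerivAt (fun y => (starRingEnd ℂ) (f y)) ((starRingEnd ℂ) c) x :=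
    fun x hf => by simpa [Function.comp_def] using (Complex.conjCLE.hasFDerivAt.comp_hasDerivAt x hf)
  have hdre : ∀ {f : ℝ → ℂ} {c : ℂ} (x : ℝ), HasDerivAt f c x →
      HasDerivAt (fun y => (f y).re) c.re x :=
    fun x hf => by simpa [Function.comp_def] using (Complex.reCLM.hasFDerivAt.comp_hasDerivAt x hf)
  have hdL : ∀ x : ℝ, HasDerivAt (fun y : ℝ => (L:ℂ) - (y:ℂ)) (-1) x := fun x =>
    by simpa using (Complex.ofRealCLM.hasDerivAt (x := x)).const_sub (L:ℂ)
  -- real-valued squares and their derivatives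
  set φ0 : ℝ → ℝ := fun x => (w x * (starRingEnd ℂ) (w x)).re with hφ0def
  set ψ0 : ℝ → ℝ := fun x => (w' x * (starRingEnd ℂ) (w x) + w x * (starRingEnd ℂ) (w' x)).re with hψ0def
  set φ2 : ℝ → ℝ := fun x => (w'' x * (starRingEnd ℂ) (w'' x)).re with hφ2def
  set ψ2 : ℝ → ℝ := fun x => (w''' x * (starRingEnd ℂ) (w'' x) + w'' x * (starRingEnd ℂ) (w''' x)).re with hψ2def
  have hdφ0 : ∀ x ∈ Set.Icc β l, HasDerivAt φ0 (ψ0 x) x := fun x hx =>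
    hdre x ((hw1 x hx).mul (hdconj x (hw1 x hx)))
  have hdφ2 : ∀ x ∈ Set.Icc β l, HasDerivAt φ2 (ψ2 x) x := fun x hx =>
    hdre x ((hw3 x hx).mul (hdconj x (hw3 x hx)))
  have cψ0 : ContinuousOn ψ0 (Set.Icc β l) :=
    Complex.continuous_re.comp_continuousOn ((cw1.mul (cconj cw)).add (cw.mul (cconj cw1)))
  have cψ2 : ContinuousOn ψ2 (Set.Icc β l) :=
    Complex.continuous_re.comp_continuousOn ((cw3.mul (cconj cw2)).add (cw2.mul (cconj cw3)))
  have cφ0 : ContinuousOn φ0 (Set.Icc β l) :=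
    Complex.continuous_re.comp_continuousOn (cw.mul (cconj cw))
  have cφ2 : ContinuousOn φ2 (Set.Icc β l) :=
    Complex.continuous_re.comp_continuousOn (cw2.mul (cconj cw2))
  have hψ0 : ∀ x, ψ0 x = 2 * (w x * (starRingEnd ℂ) (w' x)).re := fun x => by
    simp only [hψ0def, Complex.add_re, Complex.mul_re, Complex.conj_re, Complex.conj_im]; ring
  have hψ2 : ∀ x, ψ2 x = 2 * ((starRingEnd ℂ) (w'' x) * w''' x).re := fun x => by
    simp only [hψ2def, Complex.add_re, Complex.mul_re, Complex.conj_re, Complex.conj_im]; ring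
  -- real IBP for φ0 and φ2
  have hIBP0 : ∫ x in β..l, (L - x) * ψ0 x
      = (L - l) * φ0 l - (L - β) * φ0 β - ∫ x in β..l, (-1 : ℝ) * φ0 x := by
    apply intervalIntegral.integral_mul_deriv_eq_deriv_mul (u' := fun _ => (-1 : ℝ))
    · intro x _; simpa using (hasDerivAt_id x).const_sub L
    · intro x hx; exact hdφ0 x (huIcc ▸ hx)
    · exact intervalIntegrable_const
    · exact hIntR cψ0
  have hIBP2' : ∫ x in β..l, (L - x) * ψ2 x
      = (L - l) * φ2 l - (L - β) * φ2 β - ∫ x in β..l, (-1 : ℝ) * φ2 x := by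
    apply intervalIntegral.integral_mul_deriv_eq_deriv_mul (u' := fun _ => (-1 : ℝ))
    · intro x _; simpa using (hasDerivAt_id x).const_sub L
    · intro x hx; exact hdφ2 x (huIcc ▸ hx)
    · exact intervalIntegrable_const
    · exact hIntR cψ2
  have hnegφ0 : ∫ x in β..l, (-1 : ℝ) * φ0 x = -∫ x in β..l, φ0 x := by
    simp [neg_one_mul, intervalIntegral.integral_neg]
  have hnegφ2 : ∫ x in β..l, (-1 : ℝ) * φ2 x = -∫ x in β..l, φ2 x := by
    simp [neg_one_mul, intervalIntegral.integral_neg]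
  -- complex IBP 1
  have hIBP1 : ∫ x in β..l, (((L:ℂ) - x) * (starRingEnd ℂ) (w' x)) * w'''' x
      = (((L:ℂ) - l) * (starRingEnd ℂ) (w' l)) * w''' l
        - (((L:ℂ) - β) * (starRingEnd ℂ) (w' β)) * w''' β
        - ∫ x in β..l, (-1 * (starRingEnd ℂ) (w' x) + ((L:ℂ) - x) * (starRingEnd ℂ) (w'' x)) * w''' x := by
    apply intervalIntegral.integral_mul_deriv_eq_deriv_mul
    · intro x hx; rw [huIcc] at hx; exact (hdL x).mul (hdconj x (hw2 x hx))
    · intro x hx; rw [huIcc] at hx; exact hw4 x hx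
    · exact hInt (((continuous_const.neg.continuousOn).mul (cconj cw1)).add (cL.mul (cconj cw2)))
    · exact hInt hcont
  -- complex IBP 2
  have hIBP2 : ∫ x in β..l, (starRingEnd ℂ) (w' x) * w''' x
      = (starRingEnd ℂ) (w' l) * w'' l - (starRingEnd ℂ) (w' β) * w'' β
        - ∫ x in β..l, (starRingEnd ℂ) (w'' x) * w'' x := by
    apply intervalIntegral.integral_mul_deriv_eq_deriv_mul
    · intro x hx; rw [huIcc] at hx; exact hdconj x (hw2 x hx)
    · intro x hx; rw [huIcc] at hx; exact hw3 x hx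
    · exact hInt (cconj cw2)
    · exact hInt cw3
  have habs : ∀ z : ℂ, (z * (starRingEnd ℂ) z).re = ‖z‖ ^ 2 := fun z => by
    rw [Complex.mul_conj]; simp [Complex.sq_norm]
  have int1 : IntervalIntegrable (fun x => -(lam:ℂ)^2 * (w x * ((L:ℂ) - x) * (starRingEnd ℂ) (w' x))) volume β l :=
    hInt (ContinuousOn.mul continuous_const.continuousOn ((cw.mul cL).mul (cconj cw1)))
  have int2 : IntervalIntegrable (fun x => (((L:ℂ) - x) * (starRingEnd ℂ) (w' x)) * w'''' x) volume β l :=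
    hInt ((cL.mul (cconj cw1)).mul hcont)
  have int3 : IntervalIntegrable (fun x => (starRingEnd ℂ) (w' x) * w''' x) volume β l :=
    hInt ((cconj cw1).mul cw3)
  have int4 : IntervalIntegrable (fun x => ((L:ℂ) - x) * ((starRingEnd ℂ) (w'' x) * w''' x)) volume β l :=
    hInt (cL.mul ((cconj cw2).mul cw3))
  have int5 : IntervalIntegrable (fun x => (starRingEnd ℂ) (w'' x) * w'' x) volume β l :=
    hInt ((cconj cw2).mul cw2)
  have hsplit : (∫ x in β..l, h x * ((L:ℂ) - (x:ℂ)) * (starRingEnd ℂ) (w' x))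
      = (∫ x in β..l, -(lam:ℂ)^2 * (w x * ((L:ℂ) - x) * (starRingEnd ℂ) (w' x)))
        + ∫ x in β..l, (((L:ℂ) - x) * (starRingEnd ℂ) (w' x)) * w'''' x := by
    rw [← intervalIntegral.integral_add int1 int2]
    apply intervalIntegral.integral_congr
    intro x _
    simp only [hh]; ring
  have E1 : (∫ x in β..l, -(lam:ℂ)^2 * (w x * ((L:ℂ) - x) * (starRingEnd ℂ) (w' x))).re
      = -(lam^2)/2 * ((L - l) * φ0 l - (L - β) * φ0 β + ∫ x in β..l, φ0 x) := by
    rw [hre int1]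
    have key : ∀ x ∈ Set.uIcc β l,
        (fun x => (-(lam:ℂ)^2 * (w x * ((L:ℂ) - x) * (starRingEnd ℂ) (w' x))).re) x
        = (fun x => (-(lam^2)/2 : ℝ) * ((L - x) * ψ0 x)) x := by
      intro x _
      have e : -(lam:ℂ)^2 * (w x * ((L:ℂ) - x) * (starRingEnd ℂ) (w' x))
          = (((-lam^2 * (L - x)) : ℝ) : ℂ) * (w x * (starRingEnd ℂ) (w' x)) := by push_cast; ring
      simp only [e, Complex.re_ofReal_mul, hψ0 x]
      ring
    rw [intervalIntegral.integral_congr key, intervalIntegral.integral_const_mul, hIBP0, hnegφ0]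
    ring
  have hsplit2 : ∫ x in β..l, (-1 * (starRingEnd ℂ) (w' x) + ((L:ℂ) - x) * (starRingEnd ℂ) (w'' x)) * w''' x
      = (- ∫ x in β..l, (starRingEnd ℂ) (w' x) * w''' x)
        + ∫ x in β..l, ((L:ℂ) - x) * ((starRingEnd ℂ) (w'' x) * w''' x) := by
    have int3n : IntervalIntegrable (fun x => -((starRingEnd ℂ) (w' x) * w''' x)) volume β l :=
      hInt ((cconj cw1).mul cw3).neg
    rw [intervalIntegral.integral_congr
      (g := fun x => -((starRingEnd ℂ) (w' x) * w''' x)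
        + ((L:ℂ) - x) * ((starRingEnd ℂ) (w'' x) * w''' x)) (fun x _ => by simp only; ring),
      intervalIntegral.integral_add int3n int4, intervalIntegral.integral_neg]
  have hreK : (∫ x in β..l, ((L:ℂ) - x) * ((starRingEnd ℂ) (w'' x) * w''' x)).re
      = 1/2 * ((L - l) * φ2 l - (L - β) * φ2 β + ∫ x in β..l, φ2 x) := by
    rw [hre int4]
    have key : ∀ x ∈ Set.uIcc β l,
        (fun x => (((L:ℂ) - x) * ((starRingEnd ℂ) (w'' x) * w''' x)).re) x
        = (fun x => (1/2 : ℝ) * ((L - x) * ψ2 x)) x := by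
      intro x _
      have e : ((L:ℂ) - x) * ((starRingEnd ℂ) (w'' x) * w''' x)
          = (((L - x) : ℝ) : ℂ) * ((starRingEnd ℂ) (w'' x) * w''' x) := by push_cast; ring
      simp only [e, Complex.re_ofReal_mul, hψ2 x]
      ring
    rw [intervalIntegral.integral_congr key, intervalIntegral.integral_const_mul, hIBP2', hnegφ2]
    ring
  have hreJ : (∫ x in β..l, (starRingEnd ℂ) (w' x) * w''' x).re
      = ((starRingEnd ℂ) (w' l) * w'' l).re - ((starRingEnd ℂ) (w' β) * w'' β).re
        - ∫ x in β..l, φ2 x := by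
    rw [hIBP2, Complex.sub_re, Complex.sub_re, hre int5]
    congr 1
    apply intervalIntegral.integral_congr
    intro x _
    simp only [hφ2def]
    rw [mul_comm]
  have E2 : (∫ x in β..l, (((L:ℂ) - x) * (starRingEnd ℂ) (w' x)) * w'''' x).re
      = ((((L:ℂ) - l) * (starRingEnd ℂ) (w' l)) * w''' l).re
        - ((((L:ℂ) - β) * (starRingEnd ℂ) (w' β)) * w''' β).re
        + ((starRingEnd ℂ) (w' l) * w'' l).re - ((starRingEnd ℂ) (w' β) * w'' β).re
        - (∫ x in β..l, φ2 x)
        - 1/2 * ((L - l) * φ2 l - (L - β) * φ2 β + ∫ x in β..l, φ2 x) := by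
    rw [hIBP1, hsplit2]
    simp only [Complex.sub_re, Complex.add_re, Complex.neg_re]
    rw [hreK, hreJ]
    ring
  have hQ0 : ∫ x in β..l, ‖w x‖^2 = ∫ x in β..l, φ0 x :=
    intervalIntegral.integral_congr (fun x _ => by simp only [hφ0def]; exact (habs (w x)).symm)
  have hQ2 : ∫ x in β..l, ‖w'' x‖^2 = ∫ x in β..l, φ2 x :=
    intervalIntegral.integral_congr (fun x _ => by simp only [hφ2def]; exact (habs (w'' x)).symm)
  have hb0β : ‖w β‖^2 = φ0 β := by simp only [hφ0def]; exact (habs (w β)).symm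
  have hb0l : ‖w l‖^2 = φ0 l := by simp only [hφ0def]; exact (habs (w l)).symm
  have hb2β : ‖w'' β‖^2 = φ2 β := by simp only [hφ2def]; exact (habs (w'' β)).symm
  have hb2l : ‖w'' l‖^2 = φ2 l := by simp only [hφ2def]; exact (habs (w'' l)).symm
  have hbl : ((((L:ℂ) - l) * w''' l + w'' l) * (starRingEnd ℂ) (w' l)).re
      = ((((L:ℂ) - l) * (starRingEnd ℂ) (w' l)) * w''' l).re + ((starRingEnd ℂ) (w' l) * w'' l).re := by
    rw [← Complex.add_re]; congr 1; ring
  have hbβ : ((((L:ℂ) - β) * w''' β + w'' β) * (starRingEnd ℂ) (w' β)).re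
      = ((((L:ℂ) - β) * (starRingEnd ℂ) (w' β)) * w''' β).re + ((starRingEnd ℂ) (w' β) * w'' β).re := by
    rw [← Complex.add_re]; congr 1; ring
  rw [hsplit, Complex.add_re, E1, E2, hQ0, hQ2, hb0β, hb0l, hb2β, hb2l, hbl, hbβ]
  ring
end

section
/- Let β < l be real numbers, let λ be a real number, and let w : ℝ → ℂ be four times continuously differentiable on [β, l] with w'(l) = 0. Set h(x) = -λ²·w(x) + w''''(x). Then Re ∫_β^l h(x)·(l - x)·conj(w'(x)) dx = -(λ²/2)·∫_β^l |w(x)|² dx + (λ²·(l - β)/2)·|w(β)|² - Re[((l - β)·w'''(β) + w''(β))·conj(w'(β))] - (3/2)·∫_β^l |w''(x)|² dx + ((l - β)/2)·|w''(β)|². -/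
open Complex intervalIntegral

/-- Multiplier identity for the beam resolvent equation `-λ²w + w'''' = h`
multiplied by `(l - x) · conj w'` on `(β, l)`, with boundary condition `w'(l) = 0`. -/
theorem stmt_2 (β l lam : ℝ) (hβl : β < l)
    (w w' w'' w''' w'''' : ℝ → ℂ)
    (hw1 : ∀ x ∈ Set.Icc β l, HasDerivAt w (w' x) x)
    (hw2 : ∀ x ∈ Set.Icc β l, HasDerivAt w' (w'' x) x)
    (hw3 : ∀ x ∈ Set.Icc β l, HasDerivAt w'' (w''' x) x)
    (hw4 : ∀ x ∈ Set.Icc β l, HasDerivAt w''' (w'''' x) x)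
    (hcont : ContinuousOn w'''' (Set.Icc β l))
    (hbc : w' l = 0)
    (h : ℝ → ℂ)
    (hh : ∀ x, h x = -(lam:ℂ)^2 * w x + w'''' x) :
    (∫ x in β..l, h x * ((l:ℂ) - (x:ℂ)) * (starRingEnd ℂ) (w' x)).re
      = -(lam^2/2) * (∫ x in β..l, ‖w x‖^2)
        + lam^2 * (l - β)/2 * ‖w β‖^2
        - ((((l:ℂ) - (β:ℂ)) * w''' β + w'' β) * (starRingEnd ℂ) (w' β)).re
        - 3/2 * (∫ x in β..l, ‖w'' x‖^2)
        + (l - β)/2 * ‖w'' β‖^2 := by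
  have hle : β ≤ l := hβl.le
  have hIcc : Set.uIcc β l = Set.Icc β l := Set.uIcc_of_le hle
  -- continuity of the derivatives
  have cw : ContinuousOn w (Set.Icc β l) := fun x hx => (hw1 x hx).continuousAt.continuousWithinAt
  have cw1 : ContinuousOn w' (Set.Icc β l) := fun x hx => (hw2 x hx).continuousAt.continuousWithinAt
  have cw2 : ContinuousOn w'' (Set.Icc β l) := fun x hx => (hw3 x hx).continuousAt.continuousWithinAt
  have cw3 : ContinuousOn w''' (Set.Icc β l) := fun x hx => (hw4 x hx).continuousAt.continuousWithinAt
  have ccw : ContinuousOn (fun x => (starRingEnd ℂ) (w x)) (Set.Icc β l) :=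
    RCLike.continuous_conj.comp_continuousOn cw
  have ccw1 : ContinuousOn (fun x => (starRingEnd ℂ) (w' x)) (Set.Icc β l) :=
    RCLike.continuous_conj.comp_continuousOn cw1
  have ccw2 : ContinuousOn (fun x => (starRingEnd ℂ) (w'' x)) (Set.Icc β l) :=
    RCLike.continuous_conj.comp_continuousOn cw2
  have cA : ContinuousOn (fun x : ℝ => (l:ℂ) - (x:ℂ)) (Set.Icc β l) :=
    (continuous_const.sub Complex.continuous_ofReal).continuousOn
  have intg : ∀ {f : ℝ → ℂ}, ContinuousOn f (Set.Icc β l) →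
      IntervalIntegrable f MeasureTheory.volume β l := by
    intro f hf
    exact (show ContinuousOn f (Set.uIcc β l) from hIcc ▸ hf).intervalIntegrable
  -- real part of an interval integral
  have hre : ∀ (f : ℝ → ℂ), IntervalIntegrable f MeasureTheory.volume β l →
      (∫ x in β..l, f x).re = ∫ x in β..l, (f x).re := by
    intro f hf
    simpa using (Complex.reCLM.intervalIntegral_comp_comm hf).symm
  -- derivative of (l - x)
  have hA : ∀ x : ℝ, HasDerivAt (fun x : ℝ => (l:ℂ) - (x:ℂ)) (-1) x := by
    intro x
    simpa using (show HasDerivAt (fun x : ℝ => ((x:ℝ):ℂ)) 1 x by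
      simpa using (hasDerivAt_id x).ofReal_comp).const_sub (l:ℂ)
  -- pointwise key lemma
  have key : ∀ (x : ℝ) (a b : ℂ),
      (((l:ℂ) - (x:ℂ)) * ((starRingEnd ℂ) a * b + (starRingEnd ℂ) b * a)).re
        = 2 * (((l:ℂ) - (x:ℂ)) * ((starRingEnd ℂ) a * b)).re := by
    intro x a b
    have h1 : (starRingEnd ℂ) a * b + (starRingEnd ℂ) b * a
        = (((2:ℝ) * ((starRingEnd ℂ) a * b).re : ℝ) : ℂ) := by
      have e : (starRingEnd ℂ) b * a = (starRingEnd ℂ) ((starRingEnd ℂ) a * b) := by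
        simp [mul_comm]
      rw [e, Complex.add_conj]
    have h2 : ((l:ℂ) - (x:ℂ)) = ((l - x : ℝ) : ℂ) := by push_cast; ring
    rw [h1, h2, Complex.re_ofReal_mul, Complex.re_ofReal_mul, Complex.ofReal_re]
    ring
  have key2 : ∀ (x : ℝ) (a b : ℂ),
      (((l:ℂ) - (x:ℂ)) * (a * (starRingEnd ℂ) b)).re
        = (((l:ℂ) - (x:ℂ)) * ((starRingEnd ℂ) a * b)).re := by
    intro x a b
    rw [show ((l:ℂ) - (x:ℂ)) = ((l - x : ℝ) : ℂ) from by push_cast; ring,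
      Complex.re_ofReal_mul, Complex.re_ofReal_mul]
    congr 1
    rw [show a * (starRingEnd ℂ) b = (starRingEnd ℂ) ((starRingEnd ℂ) a * b) from by
      simp [mul_comm], Complex.conj_re]
  -- conj z * z = |z|^2
  have habs : ∀ z : ℂ, (starRingEnd ℂ) z * z = ((‖z‖ ^ 2 : ℝ) : ℂ) := by
    intro z
    rw [mul_comm, Complex.mul_conj, Complex.sq_norm]
  -- |f|² integrals as complex integrals
  have hNf : ∀ (f : ℝ → ℂ),
      (∫ x in β..l, (starRingEnd ℂ) (f x) * f x)
        = ((∫ x in β..l, ‖f x‖ ^ 2 : ℝ) : ℂ) := by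
    intro f
    rw [← intervalIntegral.integral_ofReal]
    exact intervalIntegral.integral_congr fun x _ => habs _
  -- IBP trick : real part of ∫ (l-x) conj(f) f'
  have htrick : ∀ (f f' : ℝ → ℂ), (∀ x ∈ Set.Icc β l, HasDerivAt f (f' x) x) →
      ContinuousOn f' (Set.Icc β l) →
      (∫ x in β..l, ((l:ℂ) - (x:ℂ)) * ((starRingEnd ℂ) (f x) * f' x)).re
        = ((∫ x in β..l, ‖f x‖ ^ 2) - (l - β) * ‖f β‖ ^ 2) / 2 := by
    intro f f' hf cf'
    have cf : ContinuousOn f (Set.Icc β l) := fun x hx => (hf x hx).continuousAt.continuousWithinAt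
    have ccf : ContinuousOn (fun x => (starRingEnd ℂ) (f x)) (Set.Icc β l) :=
      RCLike.continuous_conj.comp_continuousOn cf
    have ccf' : ContinuousOn (fun x => (starRingEnd ℂ) (f' x)) (Set.Icc β l) :=
      RCLike.continuous_conj.comp_continuousOn cf'
    have cbig : ContinuousOn (fun x : ℝ => ((l:ℂ) - (x:ℂ)) *
        ((starRingEnd ℂ) (f' x) * f x + (starRingEnd ℂ) (f x) * f' x)) (Set.Icc β l) :=
      cA.mul ((ccf'.mul cf).add (ccf.mul cf'))
    have cg : ContinuousOn (fun x : ℝ => ((l:ℂ) - (x:ℂ)) *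
        ((starRingEnd ℂ) (f x) * f' x)) (Set.Icc β l) := cA.mul (ccf.mul cf')
    have ibp := intervalIntegral.integral_mul_deriv_eq_deriv_mul
      (u := fun x : ℝ => (l:ℂ) - (x:ℂ))
      (v := fun x => (starRingEnd ℂ) (f x) * f x)
      (u' := fun _ => (-1 : ℂ))
      (v' := fun x => (starRingEnd ℂ) (f' x) * f x + (starRingEnd ℂ) (f x) * f' x)
      (fun x _ => hA x)
      (fun x hx => ((hf x (hIcc ▸ hx)).star.mul (hf x (hIcc ▸ hx))))
      intervalIntegrable_const
      (intg ((ccf'.mul cf).add (ccf.mul cf')))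
    have ibp2 : (∫ x in β..l, ((l:ℂ) - (x:ℂ)) *
          ((starRingEnd ℂ) (f' x) * f x + (starRingEnd ℂ) (f x) * f' x))
        = ((l:ℂ) - (l:ℂ)) * ((starRingEnd ℂ) (f l) * f l)
          - ((l:ℂ) - (β:ℂ)) * ((starRingEnd ℂ) (f β) * f β)
          - ∫ x in β..l, (-1 : ℂ) * ((starRingEnd ℂ) (f x) * f x) := ibp
    have hneg : (∫ x in β..l, (-1 : ℂ) * ((starRingEnd ℂ) (f x) * f x))
        = - ∫ x in β..l, (starRingEnd ℂ) (f x) * f x := by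
      rw [show (∫ x in β..l, (-1 : ℂ) * ((starRingEnd ℂ) (f x) * f x))
          = ∫ x in β..l, -((starRingEnd ℂ) (f x) * f x) from
        intervalIntegral.integral_congr fun x _ => by ring, intervalIntegral.integral_neg]
    rw [sub_self, zero_mul, hneg, hNf f, habs] at ibp2
    have ibp3 : (∫ x in β..l, ((l:ℂ) - (x:ℂ)) *
          ((starRingEnd ℂ) (f' x) * f x + (starRingEnd ℂ) (f x) * f' x))
        = (((-(l - β)) * ‖f β‖ ^ 2
            + (∫ x in β..l, ‖f x‖ ^ 2) : ℝ) : ℂ) := by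
      rw [ibp2]; push_cast; ring
    have hres := congrArg Complex.re ibp3
    rw [hre _ (intg cbig), Complex.ofReal_re] at hres
    have h3 : (∫ x in β..l, (((l:ℂ) - (x:ℂ)) *
          ((starRingEnd ℂ) (f' x) * f x + (starRingEnd ℂ) (f x) * f' x)).re)
        = ∫ x in β..l, 2 * (((l:ℂ) - (x:ℂ)) * ((starRingEnd ℂ) (f x) * f' x)).re :=
      intervalIntegral.integral_congr fun x _ => by rw [add_comm]; exact key x (f x) (f' x)
    rw [h3, intervalIntegral.integral_const_mul] at hres
    rw [hre _ (intg cg)]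
    linarith
  -- E1 : main integration by parts
  have E1 : (∫ x in β..l, (((l:ℂ) - (x:ℂ)) * (starRingEnd ℂ) (w' x)) * w'''' x)
      = - ((((l:ℂ) - (β:ℂ)) * (starRingEnd ℂ) (w' β)) * w''' β)
        - ∫ x in β..l, (((l:ℂ) - (x:ℂ)) * (starRingEnd ℂ) (w'' x)
            - (starRingEnd ℂ) (w' x)) * w''' x := by
    have ibp := intervalIntegral.integral_mul_deriv_eq_deriv_mul
      (u := fun x : ℝ => ((l:ℂ) - (x:ℂ)) * (starRingEnd ℂ) (w' x))
      (v := w''')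
      (u' := fun x => ((l:ℂ) - (x:ℂ)) * (starRingEnd ℂ) (w'' x) - (starRingEnd ℂ) (w' x))
      (v' := w'''')
      (fun x hx => by
        have := (hA x).mul ((hw2 x (hIcc ▸ hx)).star)
        refine this.congr_deriv ?_
        simp only [starRingEnd_apply]
        ring)
      (fun x hx => hw4 x (hIcc ▸ hx))
      (intg ((cA.mul ccw2).sub ccw1))
      (intg hcont)
    have ibp2 : (∫ x in β..l, (((l:ℂ) - (x:ℂ)) * (starRingEnd ℂ) (w' x)) * w'''' x)
        = (((l:ℂ) - (l:ℂ)) * (starRingEnd ℂ) (w' l)) * w''' l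
          - (((l:ℂ) - (β:ℂ)) * (starRingEnd ℂ) (w' β)) * w''' β
          - ∫ x in β..l, (((l:ℂ) - (x:ℂ)) * (starRingEnd ℂ) (w'' x)
              - (starRingEnd ℂ) (w' x)) * w''' x := ibp
    rw [sub_self, zero_mul, zero_mul, zero_sub] at ibp2
    exact ibp2
  -- E2
  have E2 : (∫ x in β..l, (starRingEnd ℂ) (w' x) * w''' x)
      = - ((starRingEnd ℂ) (w' β) * w'' β)
        - ((∫ x in β..l, ‖w'' x‖ ^ 2 : ℝ) : ℂ) := by
    have ibp := intervalIntegral.integral_mul_deriv_eq_deriv_mul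
      (u := fun x => (starRingEnd ℂ) (w' x))
      (v := w'')
      (u' := fun x => (starRingEnd ℂ) (w'' x))
      (v' := w''')
      (fun x hx => (hw2 x (hIcc ▸ hx)).star)
      (fun x hx => hw3 x (hIcc ▸ hx))
      (intg ccw2)
      (intg cw3)
    have ibp2 : (∫ x in β..l, (starRingEnd ℂ) (w' x) * w''' x)
        = (starRingEnd ℂ) (w' l) * w'' l - (starRingEnd ℂ) (w' β) * w'' β
          - ∫ x in β..l, (starRingEnd ℂ) (w'' x) * w'' x := ibp
    rw [hbc, map_zero, zero_mul, zero_sub, hNf w''] at ibp2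
    exact ibp2
  -- split the inner integral of E1
  have hD : (∫ x in β..l, (((l:ℂ) - (x:ℂ)) * (starRingEnd ℂ) (w'' x)
        - (starRingEnd ℂ) (w' x)) * w''' x)
      = (∫ x in β..l, ((l:ℂ) - (x:ℂ)) * ((starRingEnd ℂ) (w'' x) * w''' x))
        - ∫ x in β..l, (starRingEnd ℂ) (w' x) * w''' x := by
    rw [show (∫ x in β..l, (((l:ℂ) - (x:ℂ)) * (starRingEnd ℂ) (w'' x)
          - (starRingEnd ℂ) (w' x)) * w''' x)
        = ∫ x in β..l, (((l:ℂ) - (x:ℂ)) * ((starRingEnd ℂ) (w'' x) * w''' x)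
            - (starRingEnd ℂ) (w' x) * w''' x) from
      intervalIntegral.integral_congr fun x _ => by ring]
    exact intervalIntegral.integral_sub (intg (cA.mul (ccw2.mul cw3))) (intg (ccw1.mul cw3))
  -- the trick applied to w and w''
  have hPre := htrick w w' hw1 cw1
  have hMre := htrick w'' w''' hw3 cw3
  -- split the main integral
  have i1 : IntervalIntegrable (fun x => -(lam:ℂ)^2 *
      (((l:ℂ) - (x:ℂ)) * (w x * (starRingEnd ℂ) (w' x)))) MeasureTheory.volume β l :=
    (intg (cA.mul (cw.mul ccw1))).const_mul _
  have i2 : IntervalIntegrable (fun x => (((l:ℂ) - (x:ℂ)) * (starRingEnd ℂ) (w' x)) * w'''' x)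
      MeasureTheory.volume β l := intg ((cA.mul ccw1).mul hcont)
  have hsplit : (∫ x in β..l, h x * ((l:ℂ) - (x:ℂ)) * (starRingEnd ℂ) (w' x))
      = -(lam:ℂ)^2 * (∫ x in β..l, ((l:ℂ) - (x:ℂ)) * (w x * (starRingEnd ℂ) (w' x)))
        + ∫ x in β..l, (((l:ℂ) - (x:ℂ)) * (starRingEnd ℂ) (w' x)) * w'''' x := by
    rw [show (∫ x in β..l, h x * ((l:ℂ) - (x:ℂ)) * (starRingEnd ℂ) (w' x))
        = ∫ x in β..l, (-(lam:ℂ)^2 * (((l:ℂ) - (x:ℂ)) * (w x * (starRingEnd ℂ) (w' x)))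
            + (((l:ℂ) - (x:ℂ)) * (starRingEnd ℂ) (w' x)) * w'''' x) from
      intervalIntegral.integral_congr fun x _ => by rw [hh x]; ring]
    rw [intervalIntegral.integral_add i1 i2, intervalIntegral.integral_const_mul]
  -- rewrite T
  have hT : (∫ x in β..l, (((l:ℂ) - (x:ℂ)) * (starRingEnd ℂ) (w' x)) * w'''' x)
      = -(((l:ℂ) - (β:ℂ)) * w''' β * (starRingEnd ℂ) (w' β))
        - w'' β * (starRingEnd ℂ) (w' β)
        - ((∫ x in β..l, ‖w'' x‖ ^ 2 : ℝ) : ℂ)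
        - ∫ x in β..l, ((l:ℂ) - (x:ℂ)) * ((starRingEnd ℂ) (w'' x) * w''' x) := by
    rw [E1, hD, E2]; ring
  have hP2 : (∫ x in β..l, ((l:ℂ) - (x:ℂ)) * (w x * (starRingEnd ℂ) (w' x))).re
      = (∫ x in β..l, ((l:ℂ) - (x:ℂ)) * ((starRingEnd ℂ) (w x) * w' x)).re := by
    rw [hre (fun x => ((l:ℂ) - (x:ℂ)) * (w x * (starRingEnd ℂ) (w' x))) (intg (cA.mul (cw.mul ccw1))),
      hre (fun x => ((l:ℂ) - (x:ℂ)) * ((starRingEnd ℂ) (w x) * w' x)) (intg (cA.mul (ccw.mul cw1)))]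
    exact intervalIntegral.integral_congr fun x _ => key2 x (w x) (w' x)
  have hlam : (-(lam:ℂ)^2 *
      (∫ x in β..l, ((l:ℂ) - (x:ℂ)) * (w x * (starRingEnd ℂ) (w' x)))).re
      = -(lam^2) * (∫ x in β..l, ((l:ℂ) - (x:ℂ)) * (w x * (starRingEnd ℂ) (w' x))).re := by
    rw [show -(lam:ℂ)^2 = ((-(lam^2) : ℝ) : ℂ) from by push_cast; ring, Complex.re_ofReal_mul]
  have hB : ((((l:ℂ) - (β:ℂ)) * w''' β + w'' β) * (starRingEnd ℂ) (w' β)).re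
      = (((l:ℂ) - (β:ℂ)) * w''' β * (starRingEnd ℂ) (w' β)).re
        + (w'' β * (starRingEnd ℂ) (w' β)).re := by
    rw [add_mul, Complex.add_re]
  rw [hsplit, hT, Complex.add_re, hlam, hP2, hPre]
  simp only [Complex.sub_re, Complex.neg_re, Complex.ofReal_re]
  rw [hMre, hB]
  ring
end

section
/- Let l < L be real numbers, let λ be a real number, and let u : ℝ → ℂ be twice continuously differentiable on [l, L]. Set h(x) = -λ²·u(x) - u''(x). Then Re ∫_l^L h(x)·(L - x)·conj(u'(x)) dx = (λ²·(L - l)/2)·|u(l)|² + ((L - l)/2)·|u'(l)|² - (λ²/2)·∫_l^L |u(x)|² dx - (1/2)·∫_l^L |u'(x)|² dx. -/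
open Complex intervalIntegral

private lemma intervalIntegral_conj' {f : ℝ → ℂ} {a b : ℝ} :
    (∫ x in a..b, (starRingEnd ℂ) (f x)) = (starRingEnd ℂ) (∫ x in a..b, f x) := by
  simp only [intervalIntegral, _root_.integral_conj, map_sub]

/-- Multiplier identity for the wave resolvent equation `-λ²u - u'' = h`
multiplied by `(L - x) · conj u'` on `(l, L)`. -/
theorem stmt_3 (l L lam : ℝ) (hlL : l < L)
    (u u' u'' : ℝ → ℂ)
    (hu1 : ∀ x ∈ Set.Icc l L, HasDerivAt u (u' x) x)
    (hu2 : ∀ x ∈ Set.Icc l L, HasDerivAt u' (u'' x) x)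
    (hcont : ContinuousOn u'' (Set.Icc l L))
    (h : ℝ → ℂ)
    (hh : ∀ x, h x = -(lam:ℂ)^2 * u x - u'' x) :
    (∫ x in l..L, h x * ((L:ℂ) - (x:ℂ)) * (starRingEnd ℂ) (u' x)).re
      = lam^2 * (L - l)/2 * ‖u l‖^2
        + (L - l)/2 * ‖u' l‖^2
        - lam^2/2 * (∫ x in l..L, ‖u x‖^2)
        - 1/2 * (∫ x in l..L, ‖u' x‖^2) := by
  have hle : l ≤ L := hlL.le
  have huIcc : Set.uIcc l L = Set.Icc l L := Set.uIcc_of_le hle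
  have hcu : ContinuousOn u (Set.Icc l L) :=
    fun x hx => (hu1 x hx).continuousAt.continuousWithinAt
  have hcu' : ContinuousOn u' (Set.Icc l L) :=
    fun x hx => (hu2 x hx).continuousAt.continuousWithinAt
  set f : ℝ → ℂ := fun x => h x * ((L:ℂ) - (x:ℂ)) * (starRingEnd ℂ) (u' x) with hf
  set K : ℝ → ℂ := fun x =>
      -(lam:ℂ)^2 * (((L:ℂ) - (x:ℂ)) * (u x * (starRingEnd ℂ) (u x)))
        - ((L:ℂ) - (x:ℂ)) * (u' x * (starRingEnd ℂ) (u' x)) with hK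
  set Kd : ℝ → ℂ := fun x =>
      (lam:ℂ)^2 * (u x * (starRingEnd ℂ) (u x)) + u' x * (starRingEnd ℂ) (u' x)
        + (f x + (starRingEnd ℂ) (f x)) with hKd
  -- derivative of K
  have hderiv : ∀ x ∈ Set.Icc l L, HasDerivAt K (Kd x) x := by
    intro x hx
    have hL : HasDerivAt (fun y : ℝ => (L:ℂ) - (y:ℂ)) (-1) x := by
      simpa using (Complex.ofRealCLM.hasDerivAt (x := x)).const_sub (L:ℂ)
    have hP : HasDerivAt (fun y => u y * (starRingEnd ℂ) (u y))
        (u' x * (starRingEnd ℂ) (u x) + u x * (starRingEnd ℂ) (u' x)) x := by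
      exact (hu1 x hx).mul (hu1 x hx).star
    have hQ : HasDerivAt (fun y => u' y * (starRingEnd ℂ) (u' y))
        (u'' x * (starRingEnd ℂ) (u' x) + u' x * (starRingEnd ℂ) (u'' x)) x := by
      exact (hu2 x hx).mul (hu2 x hx).star
    have hA : HasDerivAt (fun y : ℝ => ((L:ℂ) - (y:ℂ)) * (u y * (starRingEnd ℂ) (u y)))
        ((-1) * (u x * (starRingEnd ℂ) (u x)) + ((L:ℂ) - (x:ℂ)) *
          (u' x * (starRingEnd ℂ) (u x) + u x * (starRingEnd ℂ) (u' x))) x := hL.mul hP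
    have hB : HasDerivAt (fun y : ℝ => ((L:ℂ) - (y:ℂ)) * (u' y * (starRingEnd ℂ) (u' y)))
        ((-1) * (u' x * (starRingEnd ℂ) (u' x)) + ((L:ℂ) - (x:ℂ)) *
          (u'' x * (starRingEnd ℂ) (u' x) + u' x * (starRingEnd ℂ) (u'' x))) x := hL.mul hQ
    have hD := (hA.const_mul (-(lam:ℂ)^2)).sub hB
    have heq : Kd x = -(lam:ℂ)^2 * ((-1) * (u x * (starRingEnd ℂ) (u x)) + ((L:ℂ) - (x:ℂ)) *
          (u' x * (starRingEnd ℂ) (u x) + u x * (starRingEnd ℂ) (u' x)))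
        - ((-1) * (u' x * (starRingEnd ℂ) (u' x)) + ((L:ℂ) - (x:ℂ)) *
          (u'' x * (starRingEnd ℂ) (u' x) + u' x * (starRingEnd ℂ) (u'' x))) := by
      simp only [hKd, hf, hh, map_mul, map_sub, map_neg, map_pow, map_add,
        Complex.conj_conj, Complex.conj_ofReal]
      ring
    rw [heq]
    exact hD
  -- continuity / integrability
  have hcc : Continuous fun x : ℝ => (L:ℂ) - (x:ℂ) :=
    continuous_const.sub Complex.continuous_ofReal
  have hcf : ContinuousOn f (Set.Icc l L) := by
    have : f = fun x => (-(lam:ℂ)^2 * u x - u'' x) * ((L:ℂ) - (x:ℂ)) *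
        (starRingEnd ℂ) (u' x) := funext fun x => by simp only [hf, hh]
    rw [this]
    exact (((continuousOn_const.mul hcu).sub hcont).mul hcc.continuousOn).mul
      (Complex.continuous_conj.comp_continuousOn hcu')
  have hcP : ContinuousOn (fun x => u x * (starRingEnd ℂ) (u x)) (Set.Icc l L) :=
    hcu.mul (Complex.continuous_conj.comp_continuousOn hcu)
  have hcQ : ContinuousOn (fun x => u' x * (starRingEnd ℂ) (u' x)) (Set.Icc l L) :=
    hcu'.mul (Complex.continuous_conj.comp_continuousOn hcu')
  have hiP : IntervalIntegrable (fun x => u x * (starRingEnd ℂ) (u x))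
      MeasureTheory.volume l L := (huIcc ▸ hcP).intervalIntegrable
  have hiQ : IntervalIntegrable (fun x => u' x * (starRingEnd ℂ) (u' x))
      MeasureTheory.volume l L := (huIcc ▸ hcQ).intervalIntegrable
  have hif : IntervalIntegrable f MeasureTheory.volume l L :=
    (huIcc ▸ hcf).intervalIntegrable
  have hicf : IntervalIntegrable (fun x => (starRingEnd ℂ) (f x))
      MeasureTheory.volume l L :=
    (huIcc ▸ (Complex.continuous_conj.comp_continuousOn hcf)).intervalIntegrable
  have hiKd : IntervalIntegrable Kd MeasureTheory.volume l L := by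
    rw [hKd]
    exact (((hiP.const_mul _).add hiQ).add (hif.add hicf))
  -- FTC
  have hftc : (∫ x in l..L, Kd x) = K L - K l :=
    intervalIntegral.integral_eq_sub_of_hasDerivAt
      (fun x hx => hderiv x (huIcc ▸ hx)) hiKd
  -- split the integral
  have hsplit : (∫ x in l..L, Kd x)
      = (lam:ℂ)^2 * (∫ x in l..L, u x * (starRingEnd ℂ) (u x))
        + (∫ x in l..L, u' x * (starRingEnd ℂ) (u' x))
        + ((∫ x in l..L, f x) + (starRingEnd ℂ) (∫ x in l..L, f x)) := by
    rw [hKd]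
    rw [intervalIntegral.integral_add ((hiP.const_mul _).add hiQ) (hif.add hicf),
      intervalIntegral.integral_add (hiP.const_mul _) hiQ,
      intervalIntegral.integral_add hif hicf,
      intervalIntegral.integral_const_mul, intervalIntegral_conj']
  -- rewrite the quadratic integrals as real integrals
  have habs : ∀ v : ℝ → ℂ, (∫ x in l..L, v x * (starRingEnd ℂ) (v x))
      = ((∫ x in l..L, ‖v x‖^2 : ℝ) : ℂ) := by
    intro v
    rw [← intervalIntegral.integral_ofReal]
    congr 1
    funext x
    rw [Complex.mul_conj]
    norm_cast
    exact (Complex.sq_norm (v x)).symm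
  have key : (∫ x in l..L, f x) + (starRingEnd ℂ) (∫ x in l..L, f x)
      = K L - K l - (lam:ℂ)^2 * ((∫ x in l..L, ‖u x‖^2 : ℝ) : ℂ)
        - ((∫ x in l..L, ‖u' x‖^2 : ℝ) : ℂ) := by
    rw [← habs u, ← habs u']
    rw [← hftc, hsplit]; ring
  have hre : (2 : ℝ) * (∫ x in l..L, f x).re
      = (K L - K l - (lam:ℂ)^2 * ((∫ x in l..L, ‖u x‖^2 : ℝ) : ℂ)
        - ((∫ x in l..L, ‖u' x‖^2 : ℝ) : ℂ)).re := by
    rw [← key, Complex.add_re, Complex.conj_re]; ring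
  have hKL : K L = 0 := by simp [hK]
  have hKl : K l = -(lam:ℂ)^2 * (((L:ℂ) - (l:ℂ)) * ((‖u l‖^2 : ℝ) : ℂ))
      - ((L:ℂ) - (l:ℂ)) * ((‖u' l‖^2 : ℝ) : ℂ) := by
    rw [hK]
    simp only [Complex.mul_conj]
    norm_cast
    rw [Complex.sq_norm, Complex.sq_norm]
  rw [hKL, hKl] at hre
  have hcast : ((0:ℂ) - (-(lam:ℂ)^2 * (((L:ℂ) - (l:ℂ)) * ((‖u l‖^2 : ℝ) : ℂ))
        - ((L:ℂ) - (l:ℂ)) * ((‖u' l‖^2 : ℝ) : ℂ))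
      - (lam:ℂ)^2 * ((∫ x in l..L, ‖u x‖^2 : ℝ) : ℂ)
      - ((∫ x in l..L, ‖u' x‖^2 : ℝ) : ℂ))
      = ((lam^2 * (L - l) * ‖u l‖^2 + (L - l) * ‖u' l‖^2
          - lam^2 * (∫ x in l..L, ‖u x‖^2)
          - (∫ x in l..L, ‖u' x‖^2) : ℝ) : ℂ) := by
    push_cast
    ring
  rw [hcast, Complex.ofReal_re] at hre
  linarith
end

section
/- Let α > 0, let λ be a real number, and let u : ℝ → ℂ be twice continuously differentiable on [0, α]. Set h(x) = -λ²·u(x) - u''(x). Then Re ∫₀^α h(x)·x·conj(u'(x)) dx = (λ²/2)·∫₀^α |u(x)|² dx + (1/2)·∫₀^α |u'(x)|² dx - (α·λ²/2)·|u(α)|² - (α/2)·|u'(α)|². -/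
open Complex intervalIntegral

/-- Multiplier identity for the wave resolvent equation `-λ²u - u'' = h`
multiplied by `x · conj u'` on `(0, α)`. -/
theorem stmt_4 (α lam : ℝ) (hα : 0 < α)
    (u u' u'' : ℝ → ℂ)
    (hu1 : ∀ x ∈ Set.Icc (0:ℝ) α, HasDerivAt u (u' x) x)
    (hu2 : ∀ x ∈ Set.Icc (0:ℝ) α, HasDerivAt u' (u'' x) x)
    (hcont : ContinuousOn u'' (Set.Icc (0:ℝ) α))
    (h : ℝ → ℂ)
    (hh : ∀ x, h x = -(lam:ℂ)^2 * u x - u'' x) :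
    (∫ x in (0:ℝ)..α, h x * (x:ℂ) * (starRingEnd ℂ) (u' x)).re
      = lam^2/2 * (∫ x in (0:ℝ)..α, ‖u x‖^2)
        + 1/2 * (∫ x in (0:ℝ)..α, ‖u' x‖^2)
        - α * lam^2/2 * ‖u α‖^2
        - α/2 * ‖u' α‖^2 := by
  have hIcc : Set.uIcc (0:ℝ) α = Set.Icc 0 α := Set.uIcc_of_le hα.le
  -- continuity
  have hcu : ContinuousOn u (Set.Icc (0:ℝ) α) :=
    fun x hx => (hu1 x hx).continuousAt.continuousWithinAt
  have hcu' : ContinuousOn u' (Set.Icc (0:ℝ) α) :=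
    fun x hx => (hu2 x hx).continuousAt.continuousWithinAt
  -- derivatives of |u|^2 and |u'|^2
  set f : ℝ → ℝ := fun x => ‖u x‖^2 with hf
  set g : ℝ → ℝ := fun x => ‖u' x‖^2 with hg
  have habs : ∀ z : ℂ, ‖z‖ ^ 2 = (z * (starRingEnd ℂ) z).re := by
    intro z
    rw [Complex.sq_norm, Complex.mul_conj, Complex.ofReal_re]
  have hdf : ∀ x ∈ Set.Icc (0:ℝ) α,
      HasDerivAt f (2 * (u x * (starRingEnd ℂ) (u' x)).re) x := by
    intro x hx
    have hprod : HasDerivAt (fun y => u y * (starRingEnd ℂ) (u y))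
        (u' x * (starRingEnd ℂ) (u x) + u x * (starRingEnd ℂ) (u' x)) x :=
      (hu1 x hx).mul (hu1 x hx).star
    have := Complex.reCLM.hasFDerivAt.comp_hasDerivAt x hprod
    have heq : f = fun y => (u y * (starRingEnd ℂ) (u y)).re := by
      funext y; exact habs (u y)
    rw [heq]
    convert this using 1
    · rfl
    · rfl
    · funext y; rfl
    refine (?_ : _ = Complex.re (u' x * (starRingEnd ℂ) (u x) + u x * (starRingEnd ℂ) (u' x))).trans rfl
    simp [Complex.add_re, Complex.mul_re, Complex.conj_re, Complex.conj_im]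
    ring
  have hdg : ∀ x ∈ Set.Icc (0:ℝ) α,
      HasDerivAt g (2 * (u'' x * (starRingEnd ℂ) (u' x)).re) x := by
    intro x hx
    have hprod : HasDerivAt (fun y => u' y * (starRingEnd ℂ) (u' y))
        (u'' x * (starRingEnd ℂ) (u' x) + u' x * (starRingEnd ℂ) (u'' x)) x :=
      (hu2 x hx).mul (hu2 x hx).star
    have := Complex.reCLM.hasFDerivAt.comp_hasDerivAt x hprod
    have heq : g = fun y => (u' y * (starRingEnd ℂ) (u' y)).re := by
      funext y; exact habs (u' y)
    rw [heq]
    convert this using 1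
    · rfl
    · rfl
    · funext y; rfl
    refine (?_ : _ = Complex.re (u'' x * (starRingEnd ℂ) (u' x) + u' x * (starRingEnd ℂ) (u'' x))).trans rfl
    simp [Complex.add_re, Complex.mul_re, Complex.conj_re, Complex.conj_im]
    ring
  -- integrability facts
  have hintH : IntervalIntegrable (fun x => h x * (x:ℂ) * (starRingEnd ℂ) (u' x))
      MeasureTheory.volume 0 α := by
    apply ContinuousOn.intervalIntegrable
    rw [hIcc]
    have : ContinuousOn h (Set.Icc (0:ℝ) α) := by
      have : h = fun x => -(lam:ℂ)^2 * u x - u'' x := funext hh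
      rw [this]
      exact (continuousOn_const.mul hcu).sub hcont
    exact (this.mul (Complex.continuous_ofReal.continuousOn)).mul
      (Complex.continuous_conj.comp_continuousOn hcu')
  have hintf' : IntervalIntegrable (fun x => 2 * (u x * (starRingEnd ℂ) (u' x)).re)
      MeasureTheory.volume 0 α := by
    apply ContinuousOn.intervalIntegrable
    rw [hIcc]
    exact (continuousOn_const.mul
      ((Complex.continuous_re.comp_continuousOn
        (hcu.mul (Complex.continuous_conj.comp_continuousOn hcu')))))
  have hintg' : IntervalIntegrable (fun x => 2 * (u'' x * (starRingEnd ℂ) (u' x)).re)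
      MeasureTheory.volume 0 α := by
    apply ContinuousOn.intervalIntegrable
    rw [hIcc]
    exact (continuousOn_const.mul
      ((Complex.continuous_re.comp_continuousOn
        (hcont.mul (Complex.continuous_conj.comp_continuousOn hcu')))))
  have hintf : IntervalIntegrable f MeasureTheory.volume 0 α := by
    apply ContinuousOn.intervalIntegrable
    rw [hIcc]
    exact ((continuous_norm.comp_continuousOn hcu).pow 2)
  have hintg : IntervalIntegrable g MeasureTheory.volume 0 α := by
    apply ContinuousOn.intervalIntegrable
    rw [hIcc]
    exact ((continuous_norm.comp_continuousOn hcu').pow 2)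
  -- integration by parts: ∫ x * f' = α f α - ∫ f
  have hid : ∀ x ∈ Set.uIcc (0:ℝ) α, HasDerivAt (fun y : ℝ => y) ((fun _ => (1:ℝ)) x) x :=
    fun x _ => hasDerivAt_id x
  have hibp_f : (∫ x in (0:ℝ)..α, x * (2 * (u x * (starRingEnd ℂ) (u' x)).re))
      = α * f α - 0 * f 0 - ∫ x in (0:ℝ)..α, 1 * f x := by
    apply intervalIntegral.integral_mul_deriv_eq_deriv_mul hid
      (fun x hx => hdf x (hIcc ▸ hx))
      (ContinuousOn.intervalIntegrable (by rw [hIcc]; exact continuousOn_const))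
      hintf'
  have hibp_g : (∫ x in (0:ℝ)..α, x * (2 * (u'' x * (starRingEnd ℂ) (u' x)).re))
      = α * g α - 0 * g 0 - ∫ x in (0:ℝ)..α, 1 * g x := by
    apply intervalIntegral.integral_mul_deriv_eq_deriv_mul hid
      (fun x hx => hdg x (hIcc ▸ hx))
      (ContinuousOn.intervalIntegrable (by rw [hIcc]; exact continuousOn_const))
      hintg'
  -- re of the integral
  have hre : (∫ x in (0:ℝ)..α, h x * (x:ℂ) * (starRingEnd ℂ) (u' x)).re
      = ∫ x in (0:ℝ)..α, (h x * (x:ℂ) * (starRingEnd ℂ) (u' x)).re := by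
    have := Complex.reCLM.intervalIntegral_comp_comm hintH
    simpa using this.symm
  -- pointwise identity for the real part
  have hpt : ∀ x : ℝ, (h x * (x:ℝ) * (starRingEnd ℂ) (u' x)).re
      = (-(lam^2)/2) * (x * (2 * (u x * (starRingEnd ℂ) (u' x)).re))
        + (-(1:ℝ)/2) * (x * (2 * (u'' x * (starRingEnd ℂ) (u' x)).re)) := by
    intro x
    have : h x * (x:ℝ) * (starRingEnd ℂ) (u' x)
        = ((-(lam^2) : ℝ) : ℂ) * ((x:ℂ) * (u x * (starRingEnd ℂ) (u' x)))
          + ((-1 : ℝ) : ℂ) * ((x:ℂ) * (u'' x * (starRingEnd ℂ) (u' x))) := by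
      rw [hh]; push_cast; ring
    rw [this]
    simp only [Complex.add_re, Complex.re_ofReal_mul]
    ring
  rw [hre]
  rw [intervalIntegral.integral_congr (g := fun x =>
      (-(lam^2)/2) * (x * (2 * (u x * (starRingEnd ℂ) (u' x)).re))
        + (-(1:ℝ)/2) * (x * (2 * (u'' x * (starRingEnd ℂ) (u' x)).re)))
      (fun x _ => hpt x)]
  have hint_xf' : IntervalIntegrable (fun x => x * (2 * (u x * (starRingEnd ℂ) (u' x)).re))
      MeasureTheory.volume 0 α :=
    (continuous_id.intervalIntegrable 0 α).mul_continuousOn (by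
      rw [hIcc]
      exact (continuousOn_const.mul
        (Complex.continuous_re.comp_continuousOn
          (hcu.mul (Complex.continuous_conj.comp_continuousOn hcu')))))
  have hint_xg' : IntervalIntegrable (fun x => x * (2 * (u'' x * (starRingEnd ℂ) (u' x)).re))
      MeasureTheory.volume 0 α :=
    (continuous_id.intervalIntegrable 0 α).mul_continuousOn (by
      rw [hIcc]
      exact (continuousOn_const.mul
        (Complex.continuous_re.comp_continuousOn
          (hcont.mul (Complex.continuous_conj.comp_continuousOn hcu')))))
  rw [intervalIntegral.integral_add ((hint_xf').const_mul _) ((hint_xg').const_mul _),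
    intervalIntegral.integral_const_mul, intervalIntegral.integral_const_mul,
    hibp_f, hibp_g]
  simp only [hf, hg, one_mul]
  ring
end

section
/- Let β < l ≤ L be real numbers, let λ be a real number, and let u : ℝ → ℂ be twice continuously differentiable on [β, l]. Set h(x) = -λ²·u(x) - u''(x). Then Re ∫_β^l h(x)·(x - L)·conj(u'(x)) dx = (λ²/2)·∫_β^l |u(x)|² dx + (1/2)·∫_β^l |u'(x)|² dx + ((L - l)/2)·(λ²·|u(l)|² + |u'(l)|²) - ((L - β)/2)·(λ²·|u(β)|² + |u'(β)|²). -/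
open Complex intervalIntegral MeasureTheory

/-- Multiplier identity for the wave resolvent equation `-λ²u - u'' = h`
multiplied by `(x - L) · conj u'` on `(β, l)` with `β < l ≤ L`. -/
theorem stmt_5 (β l L lam : ℝ) (hβl : β < l) (hlL : l ≤ L)
    (u u' u'' : ℝ → ℂ)
    (hu1 : ∀ x ∈ Set.Icc β l, HasDerivAt u (u' x) x)
    (hu2 : ∀ x ∈ Set.Icc β l, HasDerivAt u' (u'' x) x)
    (hcont : ContinuousOn u'' (Set.Icc β l))
    (h : ℝ → ℂ)
    (hh : ∀ x, h x = -(lam:ℂ)^2 * u x - u'' x) :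
    (∫ x in β..l, h x * ((x:ℂ) - (L:ℂ)) * (starRingEnd ℂ) (u' x)).re
      = lam^2/2 * (∫ x in β..l, ‖u x‖^2)
        + 1/2 * (∫ x in β..l, ‖u' x‖^2)
        + (L - l)/2 * (lam^2 * ‖u l‖^2 + ‖u' l‖^2)
        - (L - β)/2 * (lam^2 * ‖u β‖^2 + ‖u' β‖^2) := by
  have hle : β ≤ l := hβl.le
  have huIcc : Set.uIcc β l = Set.Icc β l := Set.uIcc_of_le hle
  have hcu : ContinuousOn u (Set.Icc β l) := fun x hx =>
    (hu1 x hx).continuousAt.continuousWithinAt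
  have hcu' : ContinuousOn u' (Set.Icc β l) := fun x hx =>
    (hu2 x hx).continuousAt.continuousWithinAt
  set N₁ : ℝ → ℝ := fun x => (u x).re ^ 2 + (u x).im ^ 2 with hN1def
  set N₂ : ℝ → ℝ := fun x => (u' x).re ^ 2 + (u' x).im ^ 2 with hN2def
  set Φ : ℝ → ℝ := fun x => (L - x) / 2 * (lam ^ 2 * N₁ x + N₂ x) with hΦdef
  set Φ' : ℝ → ℝ := fun x =>
    (-1/2) * (lam ^ 2 * N₁ x + N₂ x)
      + (L - x) / 2 * (lam ^ 2 * (2*(u x).re*(u' x).re + 2*(u x).im*(u' x).im)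
          + (2*(u' x).re*(u'' x).re + 2*(u' x).im*(u'' x).im)) with hΦ'def
  -- derivatives
  have hre : ∀ x ∈ Set.Icc β l, HasDerivAt (fun y => (u y).re) ((u' x).re) x := fun x hx =>
    (Complex.reCLM.hasFDerivAt.comp_hasDerivAt x (hu1 x hx))
  have him : ∀ x ∈ Set.Icc β l, HasDerivAt (fun y => (u y).im) ((u' x).im) x := fun x hx =>
    (Complex.imCLM.hasFDerivAt.comp_hasDerivAt x (hu1 x hx))
  have hre' : ∀ x ∈ Set.Icc β l, HasDerivAt (fun y => (u' y).re) ((u'' x).re) x := fun x hx =>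
    (Complex.reCLM.hasFDerivAt.comp_hasDerivAt x (hu2 x hx))
  have him' : ∀ x ∈ Set.Icc β l, HasDerivAt (fun y => (u' y).im) ((u'' x).im) x := fun x hx =>
    (Complex.imCLM.hasFDerivAt.comp_hasDerivAt x (hu2 x hx))
  have hN1 : ∀ x ∈ Set.Icc β l,
      HasDerivAt N₁ (2*(u x).re*(u' x).re + 2*(u x).im*(u' x).im) x := by
    intro x hx
    have := ((hre x hx).pow 2).add ((him x hx).pow 2)
    exact this.congr_deriv (by ring)
  have hN2 : ∀ x ∈ Set.Icc β l,
      HasDerivAt N₂ (2*(u' x).re*(u'' x).re + 2*(u' x).im*(u'' x).im) x := by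
    intro x hx
    have := ((hre' x hx).pow 2).add ((him' x hx).pow 2)
    exact this.congr_deriv (by ring)
  have hΦd : ∀ x ∈ Set.Icc β l, HasDerivAt Φ (Φ' x) x := by
    intro x hx
    have hlin : HasDerivAt (fun y => (L - y) / 2) (-1/2) x := by
      simpa using ((hasDerivAt_id x).const_sub L).div_const 2
    have := hlin.mul (((hN1 x hx).const_mul (lam ^ 2)).add (hN2 x hx))
    exact this
  -- continuity of auxiliary functions
  have hcre : ContinuousOn (fun x => (u x).re) (Set.Icc β l) := Complex.continuous_re.comp_continuousOn hcu
  have hcim : ContinuousOn (fun x => (u x).im) (Set.Icc β l) := Complex.continuous_im.comp_continuousOn hcu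
  have hcre' : ContinuousOn (fun x => (u' x).re) (Set.Icc β l) := Complex.continuous_re.comp_continuousOn hcu'
  have hcim' : ContinuousOn (fun x => (u' x).im) (Set.Icc β l) := Complex.continuous_im.comp_continuousOn hcu'
  have hcre'' : ContinuousOn (fun x => (u'' x).re) (Set.Icc β l) := Complex.continuous_re.comp_continuousOn hcont
  have hcim'' : ContinuousOn (fun x => (u'' x).im) (Set.Icc β l) := Complex.continuous_im.comp_continuousOn hcont
  have hcN1 : ContinuousOn N₁ (Set.Icc β l) := (hcre.pow 2).add (hcim.pow 2)
  have hcN2 : ContinuousOn N₂ (Set.Icc β l) := (hcre'.pow 2).add (hcim'.pow 2)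
  have hcΦ' : ContinuousOn Φ' (Set.Icc β l) := by
    rw [hΦ'def]
    fun_prop
  -- complex integrand integrable
  have hch : ContinuousOn h (Set.Icc β l) := by
    have : ContinuousOn (fun x => -(lam:ℂ)^2 * u x - u'' x) (Set.Icc β l) :=
      (continuousOn_const.mul hcu).sub hcont
    exact this.congr fun x _ => hh x
  have hci : ContinuousOn (fun x => h x * ((x:ℂ) - (L:ℂ)) * (starRingEnd ℂ) (u' x))
      (Set.Icc β l) :=
    (hch.mul ((Complex.continuous_ofReal.continuousOn).sub continuousOn_const)).mul hcu'.star
  have hint : IntervalIntegrable (fun x => h x * ((x:ℂ) - (L:ℂ)) * (starRingEnd ℂ) (u' x))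
      volume β l := (hci.mono (by rw [huIcc])).intervalIntegrable
  -- move Re inside
  have hre_int : (∫ x in β..l, h x * ((x:ℂ) - (L:ℂ)) * (starRingEnd ℂ) (u' x)).re
      = ∫ x in β..l, (h x * ((x:ℂ) - (L:ℂ)) * (starRingEnd ℂ) (u' x)).re := by
    have := Complex.reCLM.intervalIntegral_comp_comm hint
    simpa using this.symm
  -- pointwise identity
  have hpt : ∀ x ∈ Set.Icc β l,
      (h x * ((x:ℂ) - (L:ℂ)) * (starRingEnd ℂ) (u' x)).re
        = Φ' x + (lam^2/2 * N₁ x + 1/2 * N₂ x) := by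
    intro x hx
    simp only [hh, hΦ'def, hN1def, hN2def, Complex.mul_re, Complex.sub_re, Complex.sub_im,
      Complex.mul_im, Complex.neg_re, Complex.neg_im, Complex.ofReal_re, Complex.ofReal_im,
      Complex.conj_re, Complex.conj_im, ← Complex.ofReal_pow]
    ring
  have habs : ∀ z : ℂ, ‖z‖ ^ 2 = z.re ^ 2 + z.im ^ 2 := fun z => by
    rw [Complex.sq_norm, Complex.normSq_apply]; ring
  have hintΦ' : IntervalIntegrable Φ' volume β l :=
    (hcΦ'.mono (by rw [huIcc])).intervalIntegrable
  have hintN1 : IntervalIntegrable N₁ volume β l :=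
    (hcN1.mono (by rw [huIcc])).intervalIntegrable
  have hintN2 : IntervalIntegrable N₂ volume β l :=
    (hcN2.mono (by rw [huIcc])).intervalIntegrable
  have h1 : (∫ x in β..l, (h x * ((x:ℂ) - (L:ℂ)) * (starRingEnd ℂ) (u' x)).re)
      = ∫ x in β..l, (Φ' x + (lam^2/2 * N₁ x + 1/2 * N₂ x)) := by
    apply intervalIntegral.integral_congr
    intro x hx
    exact hpt x (huIcc ▸ hx)
  have h2 : (∫ x in β..l, Φ' x) = Φ l - Φ β := by
    apply intervalIntegral.integral_eq_sub_of_hasDerivAt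
    · intro x hx
      exact hΦd x (huIcc ▸ hx)
    · exact hintΦ'
  have e1 : (∫ x in β..l, ‖u x‖^2) = ∫ x in β..l, N₁ x := by
    apply intervalIntegral.integral_congr
    intro x _
    simp only [hN1def, habs]
  have e2 : (∫ x in β..l, ‖u' x‖^2) = ∫ x in β..l, N₂ x := by
    apply intervalIntegral.integral_congr
    intro x _
    simp only [hN2def, habs]
  rw [hre_int, h1, intervalIntegral.integral_add hintΦ'
    ((hintN1.const_mul _).add (hintN2.const_mul _)), h2,
    intervalIntegral.integral_add (hintN1.const_mul _) (hintN2.const_mul _),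
    intervalIntegral.integral_const_mul, intervalIntegral.integral_const_mul, e1, e2,
    habs (u l), habs (u' l), habs (u β), habs (u' β)]
  simp only [hΦdef, hN1def, hN2def]
  ring
end

section
/- Let l < L be real numbers, let λ be a real number, and let u : ℝ → ℂ be four times continuously differentiable on [l, L] with u'(l) = 0 and u'(L) = 0. Set h(x) = -λ²·u(x) + u''''(x). Then Re ∫_l^L h(x)·(L - x)·conj(u'(x)) dx = -(λ²/2)·∫_l^L |u(x)|² dx - (3/2)·∫_l^L |u''(x)|² dx + ((L - l)/2)·(λ²·|u(l)|² + |u''(l)|²). -/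
open Complex intervalIntegral

/-- Multiplier identity for the beam resolvent equation `-λ²u + u'''' = h`
multiplied by `(L - x) · conj u'` on `(l, L)`, with boundary conditions
`u'(l) = 0` and `u'(L) = 0`. -/
theorem stmt_6 (l L lam : ℝ) (hlL : l < L)
    (u u' u'' u''' u'''' : ℝ → ℂ)
    (hu1 : ∀ x ∈ Set.Icc l L, HasDerivAt u (u' x) x)
    (hu2 : ∀ x ∈ Set.Icc l L, HasDerivAt u' (u'' x) x)
    (hu3 : ∀ x ∈ Set.Icc l L, HasDerivAt u'' (u''' x) x)
    (hu4 : ∀ x ∈ Set.Icc l L, HasDerivAt u''' (u'''' x) x)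
    (hcont : ContinuousOn u'''' (Set.Icc l L))
    (hbcl : u' l = 0) (hbcL : u' L = 0)
    (h : ℝ → ℂ)
    (hh : ∀ x, h x = -(lam:ℂ)^2 * u x + u'''' x) :
    (∫ x in l..L, h x * ((L:ℂ) - (x:ℂ)) * (starRingEnd ℂ) (u' x)).re
      = -(lam^2/2) * (∫ x in l..L, ‖u x‖^2)
        - 3/2 * (∫ x in l..L, ‖u'' x‖^2)
        + (L - l)/2 * (lam^2 * ‖u l‖^2 + ‖u'' l‖^2) := by
  have hll : l ≤ L := hlL.le
  have hIcc : Set.uIcc l L = Set.Icc l L := Set.uIcc_of_le hll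
  have hcu0 : ContinuousOn u (Set.Icc l L) := fun x hx => (hu1 x hx).continuousAt.continuousWithinAt
  have hcu1 : ContinuousOn u' (Set.Icc l L) := fun x hx => (hu2 x hx).continuousAt.continuousWithinAt
  have hcu2 : ContinuousOn u'' (Set.Icc l L) := fun x hx => (hu3 x hx).continuousAt.continuousWithinAt
  have hcu3 : ContinuousOn u''' (Set.Icc l L) := fun x hx => (hu4 x hx).continuousAt.continuousWithinAt
  set c1 : ℂ := ((-(lam ^ 2) / 2 : ℝ) : ℂ) with hc1
  set c2 : ℂ := ((-(1 : ℝ) / 2 : ℝ) : ℂ) with hc2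
  set F : ℝ → ℂ := fun x => (-(lam:ℂ)^2 * u x + u'''' x) * ((L:ℂ) - (x:ℂ)) * (starRingEnd ℂ) (u' x) with hFdef
  have hFcont : ContinuousOn F (Set.Icc l L) := by
    apply ContinuousOn.mul
    apply ContinuousOn.mul
    · exact (continuousOn_const.mul hcu0).add hcont
    · exact continuousOn_const.sub Complex.continuous_ofReal.continuousOn
    · exact continuous_star.comp_continuousOn hcu1
  set G : ℝ → ℝ := fun x =>
    (((L:ℂ) - (x:ℂ)) * (c1 * (u x * (starRingEnd ℂ) (u x)) + u''' x * (starRingEnd ℂ) (u' x)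
      + c2 * (u'' x * (starRingEnd ℂ) (u'' x))) + u'' x * (starRingEnd ℂ) (u' x)).re with hGdef
  set D : ℝ → ℝ := fun x => (F x).re + lam^2/2 * ‖u x‖^2 + 3/2 * ‖u'' x‖^2 with hDdef
  have key : ∀ x ∈ Set.Icc l L, HasDerivAt G (D x) x := by
    intro x hx
    have h1 := hu1 x hx
    have h2 := hu2 x hx
    have h3 := hu3 x hx
    have h4 := hu4 x hx
    have s0 : HasDerivAt (fun y => (starRingEnd ℂ) (u y)) ((starRingEnd ℂ) (u' x)) x := h1.star
    have s1 : HasDerivAt (fun y => (starRingEnd ℂ) (u' y)) ((starRingEnd ℂ) (u'' x)) x := h2.star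
    have s2 : HasDerivAt (fun y => (starRingEnd ℂ) (u'' y)) ((starRingEnd ℂ) (u''' x)) x := h3.star
    have hLx : HasDerivAt (fun y : ℝ => (L:ℂ) - (y:ℂ)) (-1) x := by
      simpa using (Complex.ofRealCLM.hasDerivAt (x := x)).const_sub (L:ℂ)
    have hP : HasDerivAt (fun y => c1 * (u y * (starRingEnd ℂ) (u y)) + u''' y * (starRingEnd ℂ) (u' y)
        + c2 * (u'' y * (starRingEnd ℂ) (u'' y)))
        (c1 * (u' x * (starRingEnd ℂ) (u x) + u x * (starRingEnd ℂ) (u' x))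
          + (u'''' x * (starRingEnd ℂ) (u' x) + u''' x * (starRingEnd ℂ) (u'' x))
          + c2 * (u''' x * (starRingEnd ℂ) (u'' x) + u'' x * (starRingEnd ℂ) (u''' x))) x :=
      (((h1.mul s0).const_mul c1).add (h4.mul s1)).add ((h3.mul s2).const_mul c2)
    have hGc : HasDerivAt (fun y : ℝ => ((L:ℂ) - (y:ℂ)) * (c1 * (u y * (starRingEnd ℂ) (u y))
        + u''' y * (starRingEnd ℂ) (u' y) + c2 * (u'' y * (starRingEnd ℂ) (u'' y)))
        + u'' y * (starRingEnd ℂ) (u' y))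
        ((-1) * (c1 * (u x * (starRingEnd ℂ) (u x)) + u''' x * (starRingEnd ℂ) (u' x)
            + c2 * (u'' x * (starRingEnd ℂ) (u'' x)))
          + ((L:ℂ) - (x:ℂ)) * (c1 * (u' x * (starRingEnd ℂ) (u x) + u x * (starRingEnd ℂ) (u' x))
            + (u'''' x * (starRingEnd ℂ) (u' x) + u''' x * (starRingEnd ℂ) (u'' x))
            + c2 * (u''' x * (starRingEnd ℂ) (u'' x) + u'' x * (starRingEnd ℂ) (u''' x)))
          + (u''' x * (starRingEnd ℂ) (u' x) + u'' x * (starRingEnd ℂ) (u'' x))) x :=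
      (hLx.mul hP).add (h3.mul s1)
    have hre := Complex.reCLM.hasFDerivAt.comp_hasDerivAt x hGc
    convert hre using 1
    · rfl
    · rfl
    · rfl
    simp only [hDdef, hFdef, Complex.sq_norm]
    simp only [hc1, hc2, Complex.reCLM_apply, Complex.mul_re, Complex.mul_im,
      Complex.add_re, Complex.add_im, Complex.sub_re, Complex.sub_im, Complex.neg_re,
      Complex.neg_im, Complex.conj_re, Complex.conj_im, Complex.ofReal_re, Complex.ofReal_im,
      Complex.one_re, Complex.one_im, Complex.normSq_apply, pow_two]
    ring
  have hDcont : ContinuousOn D (Set.Icc l L) := by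
    refine ((Complex.continuous_re.comp_continuousOn hFcont).add
      (continuousOn_const.mul ((continuous_norm.comp_continuousOn hcu0).pow 2))).add
      (continuousOn_const.mul ((continuous_norm.comp_continuousOn hcu2).pow 2))
  have hDint : IntervalIntegrable D MeasureTheory.volume l L := by
    apply ContinuousOn.intervalIntegrable; rwa [hIcc]
  have hFint : IntervalIntegrable F MeasureTheory.volume l L := by
    apply ContinuousOn.intervalIntegrable; rwa [hIcc]
  have hAint : IntervalIntegrable (fun x => ‖u x‖^2) MeasureTheory.volume l L := by
    apply ContinuousOn.intervalIntegrable
    rw [hIcc]; exact (continuous_norm.comp_continuousOn hcu0).pow 2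
  have hBint : IntervalIntegrable (fun x => ‖u'' x‖^2) MeasureTheory.volume l L := by
    apply ContinuousOn.intervalIntegrable
    rw [hIcc]; exact (continuous_norm.comp_continuousOn hcu2).pow 2
  have hftc : ∫ x in l..L, D x = G L - G l := by
    apply intervalIntegral.integral_eq_sub_of_hasDerivAt
    · rw [hIcc]; exact key
    · exact hDint
  have hFre : IntervalIntegrable (fun x => (F x).re) MeasureTheory.volume l L := by
    apply ContinuousOn.intervalIntegrable
    rw [hIcc]; exact Complex.continuous_re.comp_continuousOn hFcont
  have hsplit : ∫ x in l..L, D x = (∫ x in l..L, (F x).re)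
      + lam^2/2 * (∫ x in l..L, ‖u x‖^2)
      + 3/2 * (∫ x in l..L, ‖u'' x‖^2) := by
    rw [hDdef]
    rw [intervalIntegral.integral_add (hFre.add (hAint.const_mul _)) (hBint.const_mul _),
      intervalIntegral.integral_add hFre (hAint.const_mul _),
      intervalIntegral.integral_const_mul, intervalIntegral.integral_const_mul]
  have hreint : (∫ x in l..L, F x).re = ∫ x in l..L, (F x).re := by
    exact (Complex.reCLM.intervalIntegral_comp_comm hFint).symm
  have hintF : (∫ x in l..L, h x * ((L:ℂ) - (x:ℂ)) * (starRingEnd ℂ) (u' x)) = ∫ x in l..L, F x := by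
    simp only [hh, hFdef]
  have hGL : G L = 0 := by
    simp [hGdef, hbcL]
  have hGl : G l = (L - l) * ((-(lam^2)/2) * ‖u l‖^2 + (-(1:ℝ)/2) * ‖u'' l‖^2) := by
    simp only [hGdef, hbcl, map_zero, mul_zero, add_zero, hc1, hc2, Complex.sq_norm]
    simp only [Complex.mul_re, Complex.add_re, Complex.add_im, Complex.mul_im, Complex.sub_re,
      Complex.sub_im, Complex.ofReal_re, Complex.ofReal_im, Complex.conj_re, Complex.conj_im,
      Complex.normSq_apply, pow_two]
    ring
  rw [hintF, hreint]
  have : (∫ x in l..L, (F x).re) = G L - G l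
      - lam^2/2 * (∫ x in l..L, ‖u x‖^2)
      - 3/2 * (∫ x in l..L, ‖u'' x‖^2) := by
    rw [← hftc, hsplit]; ring
  rw [this, hGL, hGl]
  ring
end

section
/- Let α > 0, let ω > 0, let w : ℝ → ℂ be four times continuously differentiable on [0, α] with w(0) = 0 and w'(0) = 0, and set F(x) = w''''(x) - ω⁴·w(x), C₁' = w'''(α) + i·ω·w''(α) - ω²·w'(α) - i·ω³·w(α), and C₂' = w''(α) - ω²·w(α). Then for every x ∈ [0, α]: w'(x) - ω·w(x) = (C₂'/((1 - i)·ω))·[exp(-i·ω·(x - α)) - exp(-ω·x)·exp(i·ω·α)] + (C₁'/(2·ω²))·[sin(ω·(x - α)) - cos(ω·(x - α)) + exp(-ω·x)·(sin(ω·α) + cos(ω·α))] + (1/ω)·∫₀^x ∫_α^τ exp(-ω·(x - τ))·sin(ω·(τ - s))·F(s) ds dτ. -/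
open Complex intervalIntegral

namespace Stmt11Aux

open Set MeasureTheory

noncomputable section

/-- A function with zero derivative within a convex set is constant there. -/
lemma const_of_deriv0 {f : ℝ → ℂ} {s : Set ℝ} (hs : Convex ℝ s)
    (hf : ∀ x ∈ s, HasDerivWithinAt f 0 s x) {a b : ℝ} (ha : a ∈ s) (hb : b ∈ s) :
    f b = f a := by
  have h := hs.norm_image_sub_le_of_norm_hasDerivWithin_le (f' := fun _ => (0:ℂ)) (C := 0)
    hf (fun x _ => by simp) ha hb
  have h0 : ‖f b - f a‖ ≤ 0 := by simpa using h
  exact sub_eq_zero.mp (norm_le_zero_iff.mp h0)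

lemma ode_zero {c : ℂ} {f : ℝ → ℂ} {s : Set ℝ} (hs : Convex ℝ s)
    (hf : ∀ x ∈ s, HasDerivWithinAt f (c * f x) s x) {a : ℝ} (ha : a ∈ s) (h0 : f a = 0) :
    ∀ x ∈ s, f x = 0 := by
  have key : ∀ y ∈ s, HasDerivWithinAt (fun t : ℝ => Complex.exp (-c * t) * f t) 0 s y := by
    intro y hy
    have h1 : HasDerivAt (fun t : ℝ => Complex.exp (-c * (t:ℂ))) (Complex.exp (-c * (y:ℂ)) * -c) y := by
      have h0' : HasDerivAt (fun t : ℝ => -c * (t : ℂ)) (-c) y := by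
        simpa using ((hasDerivAt_id y).ofReal_comp).const_mul (-c)
      exact h0'.cexp
    have h2 := h1.hasDerivWithinAt.mul (hf y hy)
    exact h2.congr_deriv (by ring)
  intro x hx
  have h := const_of_deriv0 hs key ha hx
  have hz : Complex.exp (-c * x) * f x = 0 := by
    rw [h, h0, mul_zero]
  exact (mul_eq_zero.mp hz).resolve_left (Complex.exp_ne_zero _)

/-- FTC within an interval. -/
lemma ftc_within {f : ℝ → ℂ} {a b c : ℝ}
    (hf : ContinuousOn f (Set.Icc a b)) (hc : c ∈ Set.Icc a b) :
    ∀ x ∈ Set.Icc a b, HasDerivWithinAt (fun u => ∫ s in c..u, f s) (f x) (Set.Icc a b) x := by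
  intro x hx
  haveI : Fact (x ∈ Set.Icc a b) := ⟨hx⟩
  exact intervalIntegral.integral_hasDerivWithinAt_right
    ((hf.mono (uIcc_subset_Icc hc hx)).intervalIntegrable)
    (hf.stronglyMeasurableAtFilter_nhdsWithin measurableSet_Icc x)
    (hf x hx)

def Aint (ω α : ℝ) (F : ℝ → ℂ) (x : ℝ) : ℂ := ∫ s in α..x, ((Real.cos (ω * s) : ℝ) : ℂ) * F s
def Bint (ω α : ℝ) (F : ℝ → ℂ) (x : ℝ) : ℂ := ∫ s in α..x, ((Real.sin (ω * s) : ℝ) : ℂ) * F s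
def Jf (ω α : ℝ) (F : ℝ → ℂ) (τ : ℝ) : ℂ :=
  ((Real.sin (ω * τ) : ℝ) : ℂ) * Aint ω α F τ - ((Real.cos (ω * τ) : ℝ) : ℂ) * Bint ω α F τ
def Phi (ω α : ℝ) (F : ℝ → ℂ) (x : ℝ) : ℂ :=
  ∫ τ in (0:ℝ)..x, Complex.exp ((ω:ℂ) * τ) * Jf ω α F τ
def Hc (ω α : ℝ) (F : ℝ → ℂ) (C₁' C₂' : ℂ) (x : ℝ) : ℂ :=
  C₂' * ((Real.cos (ω * (x - α)) : ℝ) : ℂ)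
    + ((C₁' - Complex.I * ω * C₂') / ω) * ((Real.sin (ω * (x - α)) : ℝ) : ℂ)
    + (1 / ω) * Jf ω α F x
def Hc' (ω α : ℝ) (F : ℝ → ℂ) (C₁' C₂' : ℂ) (x : ℝ) : ℂ :=
  -((ω:ℂ) * C₂') * ((Real.sin (ω * (x - α)) : ℝ) : ℂ)
    + (C₁' - Complex.I * ω * C₂') * ((Real.cos (ω * (x - α)) : ℝ) : ℂ)
    + ((Real.cos (ω * x) : ℝ) : ℂ) * Aint ω α F x
    + ((Real.sin (ω * x) : ℝ) : ℂ) * Bint ω α F x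
def Gt (ω α : ℝ) (F : ℝ → ℂ) (C₁' C₂' : ℂ) (x : ℝ) : ℂ :=
  C₂' / ((1 - Complex.I) * ω) * (Complex.exp (-(Complex.I * ((ω * (x - α) : ℝ) : ℂ)))
      - Complex.exp (-((ω:ℂ) * x)) * Complex.exp (Complex.I * ((ω * α : ℝ) : ℂ)))
  + C₁' / (2 * (ω:ℂ)^2) * (((Real.sin (ω * (x - α)) : ℝ) : ℂ) - ((Real.cos (ω * (x - α)) : ℝ) : ℂ)
      + Complex.exp (-((ω:ℂ) * x)) * (((Real.sin (ω * α) : ℝ) : ℂ) + ((Real.cos (ω * α) : ℝ) : ℂ)))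
  + (1 / (ω:ℂ)) * (Complex.exp (-((ω:ℂ) * x)) * Phi ω α F x)

variable {ω α : ℝ} {F : ℝ → ℂ} {C₁' C₂' : ℂ}

lemma contA (hFc : ContinuousOn F (Set.Icc 0 α)) :
    ContinuousOn (fun s => ((Real.cos (ω * s) : ℝ) : ℂ) * F s) (Set.Icc 0 α) :=
  ((Complex.continuous_ofReal.comp (Real.continuous_cos.comp
    (continuous_const.mul continuous_id))).continuousOn).mul hFc

lemma contB (hFc : ContinuousOn F (Set.Icc 0 α)) :
    ContinuousOn (fun s => ((Real.sin (ω * s) : ℝ) : ℂ) * F s) (Set.Icc 0 α) :=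
  ((Complex.continuous_ofReal.comp (Real.continuous_sin.comp
    (continuous_const.mul continuous_id))).continuousOn).mul hFc

lemma hA (hα : 0 ≤ α) (hFc : ContinuousOn F (Set.Icc 0 α)) :
    ∀ x ∈ Set.Icc 0 α, HasDerivWithinAt (Aint ω α F)
      (((Real.cos (ω * x) : ℝ) : ℂ) * F x) (Set.Icc 0 α) x := by
  intro x hx
  exact ftc_within (contA hFc) ⟨hα, le_refl α⟩ x hx

lemma hB (hα : 0 ≤ α) (hFc : ContinuousOn F (Set.Icc 0 α)) :
    ∀ x ∈ Set.Icc 0 α, HasDerivWithinAt (Bint ω α F)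
      (((Real.sin (ω * x) : ℝ) : ℂ) * F x) (Set.Icc 0 α) x := by
  intro x hx
  exact ftc_within (contB hFc) ⟨hα, le_refl α⟩ x hx

lemma contJ (hα : 0 ≤ α) (hFc : ContinuousOn F (Set.Icc 0 α)) :
    ContinuousOn (Jf ω α F) (Set.Icc 0 α) := by
  have cA : ContinuousOn (Aint ω α F) (Set.Icc 0 α) :=
    fun x hx => (hA hα hFc x hx).continuousWithinAt
  have cB : ContinuousOn (Bint ω α F) (Set.Icc 0 α) :=
    fun x hx => (hB hα hFc x hx).continuousWithinAt
  exact (((Complex.continuous_ofReal.comp (Real.continuous_sin.comp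
    (continuous_const.mul continuous_id))).continuousOn).mul cA).sub
    (((Complex.continuous_ofReal.comp (Real.continuous_cos.comp
    (continuous_const.mul continuous_id))).continuousOn).mul cB)

lemma hPhi (hα : 0 ≤ α) (hFc : ContinuousOn F (Set.Icc 0 α)) :
    ∀ x ∈ Set.Icc 0 α, HasDerivWithinAt (Phi ω α F)
      (Complex.exp ((ω:ℂ) * x) * Jf ω α F x) (Set.Icc 0 α) x := by
  intro x hx
  exact ftc_within (((Complex.continuous_exp.comp
    (continuous_const.mul Complex.continuous_ofReal)).continuousOn).mul (contJ hα hFc))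
    ⟨le_refl 0, hα⟩ x hx

lemma hd_cos_sub (ω α : ℝ) (x : ℝ) :
    HasDerivAt (fun x : ℝ => ((Real.cos (ω * (x - α)) : ℝ) : ℂ))
      ((-Real.sin (ω * (x - α)) * (ω * 1) : ℝ) : ℂ) x :=
  ((((hasDerivAt_id x).sub_const α).const_mul ω).cos).ofReal_comp

lemma hd_sin_sub (ω α : ℝ) (x : ℝ) :
    HasDerivAt (fun x : ℝ => ((Real.sin (ω * (x - α)) : ℝ) : ℂ))
      ((Real.cos (ω * (x - α)) * (ω * 1) : ℝ) : ℂ) x :=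
  ((((hasDerivAt_id x).sub_const α).const_mul ω).sin).ofReal_comp

lemma hd_cos (ω : ℝ) (x : ℝ) :
    HasDerivAt (fun x : ℝ => ((Real.cos (ω * x) : ℝ) : ℂ))
      ((-Real.sin (ω * x) * (ω * 1) : ℝ) : ℂ) x :=
  (((hasDerivAt_id x).const_mul ω).cos).ofReal_comp

lemma hd_sin (ω : ℝ) (x : ℝ) :
    HasDerivAt (fun x : ℝ => ((Real.sin (ω * x) : ℝ) : ℂ))
      ((Real.cos (ω * x) * (ω * 1) : ℝ) : ℂ) x :=
  (((hasDerivAt_id x).const_mul ω).sin).ofReal_comp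

lemma hHc_deriv (hα : 0 ≤ α) (hω : ω ≠ 0) (hFc : ContinuousOn F (Set.Icc 0 α)) :
    ∀ x ∈ Set.Icc 0 α, HasDerivWithinAt (Hc ω α F C₁' C₂')
      (Hc' ω α F C₁' C₂' x) (Set.Icc 0 α) x := by
  intro x hx
  have hAx := hA (ω := ω) hα hFc x hx
  have hBx := hB (ω := ω) hα hFc x hx
  have H : HasDerivWithinAt (Hc ω α F C₁' C₂')
      (C₂' * ((-Real.sin (ω * (x - α)) * (ω * 1) : ℝ) : ℂ)
       + ((C₁' - Complex.I * ω * C₂') / ω) * ((Real.cos (ω * (x - α)) * (ω * 1) : ℝ) : ℂ)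
       + (1 / (ω:ℂ)) *
         ((((Real.cos (ω * x) * (ω * 1) : ℝ) : ℂ) * Aint ω α F x
            + ((Real.sin (ω * x) : ℝ) : ℂ) * (((Real.cos (ω * x) : ℝ) : ℂ) * F x))
          - (((-Real.sin (ω * x) * (ω * 1) : ℝ) : ℂ) * Bint ω α F x
            + ((Real.cos (ω * x) : ℝ) : ℂ) * (((Real.sin (ω * x) : ℝ) : ℂ) * F x))))
      (Set.Icc 0 α) x := by
    exact (((hd_cos_sub ω α x).hasDerivWithinAt.const_mul C₂').add
      ((hd_sin_sub ω α x).hasDerivWithinAt.const_mul ((C₁' - Complex.I * ω * C₂') / ω))).add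
      ((((hd_sin ω x).hasDerivWithinAt.mul hAx).sub
        ((hd_cos ω x).hasDerivWithinAt.mul hBx)).const_mul (1 / (ω:ℂ)))
  convert H using 1
  have hωC : (ω:ℂ) ≠ 0 := Complex.ofReal_ne_zero.mpr hω
  simp only [Hc']
  push_cast
  field_simp
  ring

lemma hHc'_deriv (hα : 0 ≤ α) (hω : ω ≠ 0) (hFc : ContinuousOn F (Set.Icc 0 α)) :
    ∀ x ∈ Set.Icc 0 α, HasDerivWithinAt (Hc' ω α F C₁' C₂')
      (F x - (ω:ℂ)^2 * Hc ω α F C₁' C₂' x) (Set.Icc 0 α) x := by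
  intro x hx
  have hAx := hA (ω := ω) hα hFc x hx
  have hBx := hB (ω := ω) hα hFc x hx
  have H : HasDerivWithinAt (Hc' ω α F C₁' C₂')
      ((-((ω:ℂ) * C₂')) * ((Real.cos (ω * (x - α)) * (ω * 1) : ℝ) : ℂ)
       + (C₁' - Complex.I * ω * C₂') * ((-Real.sin (ω * (x - α)) * (ω * 1) : ℝ) : ℂ)
       + (((-Real.sin (ω * x) * (ω * 1) : ℝ) : ℂ) * Aint ω α F x
          + ((Real.cos (ω * x) : ℝ) : ℂ) * (((Real.cos (ω * x) : ℝ) : ℂ) * F x))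
       + (((Real.cos (ω * x) * (ω * 1) : ℝ) : ℂ) * Bint ω α F x
          + ((Real.sin (ω * x) : ℝ) : ℂ) * (((Real.sin (ω * x) : ℝ) : ℂ) * F x)))
      (Set.Icc 0 α) x := by
    exact ((((hd_sin_sub ω α x).hasDerivWithinAt.const_mul (-((ω:ℂ) * C₂'))).add
      ((hd_cos_sub ω α x).hasDerivWithinAt.const_mul (C₁' - Complex.I * ω * C₂'))).add
      ((hd_cos ω x).hasDerivWithinAt.mul hAx)).add
      ((hd_sin ω x).hasDerivWithinAt.mul hBx)
  convert H using 1
  have hωC : (ω:ℂ) ≠ 0 := Complex.ofReal_ne_zero.mpr hω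
  have pyth : ((Real.cos (ω * x) : ℝ) : ℂ)^2 + ((Real.sin (ω * x) : ℝ) : ℂ)^2 = 1 := by
    norm_cast
    exact Real.cos_sq_add_sin_sq _
  simp only [Hc, Jf]
  push_cast
  field_simp
  have pythC : Complex.cos ((ω:ℂ) * x)^2 + Complex.sin ((ω:ℂ) * x)^2 = 1 :=
    Complex.cos_sq_add_sin_sq _
  linear_combination (-F x) * pythC

lemma Hc_alpha : Hc ω α F C₁' C₂' α = C₂' := by
  simp [Hc, Jf, Aint, Bint, intervalIntegral.integral_same, sub_self]

lemma Hc'_alpha : Hc' ω α F C₁' C₂' α + Complex.I * ω * Hc ω α F C₁' C₂' α = C₁' := by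
  rw [Hc_alpha]
  simp only [Hc', Aint, Bint, intervalIntegral.integral_same, sub_self, mul_zero,
    Real.sin_zero, Real.cos_zero]
  push_cast
  ring


lemma stepA (hα : 0 ≤ α) (hω : ω ≠ 0) (hFc : ContinuousOn F (Set.Icc 0 α))
    (w w' w'' w''' w'''' : ℝ → ℂ)
    (hw1 : ∀ x ∈ Set.Icc (0:ℝ) α, HasDerivAt w (w' x) x)
    (hw2 : ∀ x ∈ Set.Icc (0:ℝ) α, HasDerivAt w' (w'' x) x)
    (hw3 : ∀ x ∈ Set.Icc (0:ℝ) α, HasDerivAt w'' (w''' x) x)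
    (hw4 : ∀ x ∈ Set.Icc (0:ℝ) α, HasDerivAt w''' (w'''' x) x)
    (hF : ∀ x, F x = w'''' x - (ω:ℂ)^4 * w x)
    (hC₁' : C₁' = w''' α + Complex.I * (ω:ℂ) * w'' α - (ω:ℂ)^2 * w' α
                   - Complex.I * (ω:ℂ)^3 * w α)
    (hC₂' : C₂' = w'' α - (ω:ℂ)^2 * w α) :
    ∀ x ∈ Set.Icc 0 α, w'' x - (ω:ℂ)^2 * w x = Hc ω α F C₁' C₂' x := by
  have hαK : α ∈ Set.Icc (0:ℝ) α := ⟨hα, le_refl α⟩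
  have hconv : Convex ℝ (Set.Icc (0:ℝ) α) := convex_Icc _ _
  have hq1 := hHc_deriv (C₁' := C₁') (C₂' := C₂') hα hω hFc
  have hq2 := hHc'_deriv (C₁' := C₁') (C₂' := C₂') hα hω hFc
  -- r := p - q is a solution of r' = iω r with r(α) = 0
  have hr : ∀ x ∈ Set.Icc (0:ℝ) α,
      HasDerivWithinAt (fun x => ((w''' x - (ω:ℂ)^2 * w' x) + Complex.I * ω * (w'' x - (ω:ℂ)^2 * w x))
          - (Hc' ω α F C₁' C₂' x + Complex.I * ω * Hc ω α F C₁' C₂' x))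
        (Complex.I * ω * (((w''' x - (ω:ℂ)^2 * w' x) + Complex.I * ω * (w'' x - (ω:ℂ)^2 * w x))
          - (Hc' ω α F C₁' C₂' x + Complex.I * ω * Hc ω α F C₁' C₂' x))) (Set.Icc (0:ℝ) α) x := by
    intro x hx
    have hp : HasDerivWithinAt
        (fun x => (w''' x - (ω:ℂ)^2 * w' x) + Complex.I * ω * (w'' x - (ω:ℂ)^2 * w x))
        ((w'''' x - (ω:ℂ)^2 * w'' x) + Complex.I * ω * (w''' x - (ω:ℂ)^2 * w' x))
        (Set.Icc (0:ℝ) α) x := by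
      exact (((hw4 x hx).sub ((hw2 x hx).const_mul ((ω:ℂ)^2))).add
        (((hw3 x hx).sub ((hw1 x hx).const_mul ((ω:ℂ)^2))).const_mul
          (Complex.I * ω))).hasDerivWithinAt
    have hq : HasDerivWithinAt
        (fun x => Hc' ω α F C₁' C₂' x + Complex.I * ω * Hc ω α F C₁' C₂' x)
        ((F x - (ω:ℂ)^2 * Hc ω α F C₁' C₂' x) + Complex.I * ω * Hc' ω α F C₁' C₂' x)
        (Set.Icc (0:ℝ) α) x := by
      exact (hq2 x hx).add ((hq1 x hx).const_mul (Complex.I * ω))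
    have hpq := hp.sub hq
    refine hpq.congr_deriv (Eq.symm ?_)
    rw [hF x]
    have hI := Complex.I_mul_I
    linear_combination ((ω:ℂ)^2 * w'' x - (ω:ℂ)^2 * Hc ω α F C₁' C₂' x
      - (ω:ℂ)^4 * w x) * hI
  have hr0 : ((w''' α - (ω:ℂ)^2 * w' α) + Complex.I * ω * (w'' α - (ω:ℂ)^2 * w α))
      - (Hc' ω α F C₁' C₂' α + Complex.I * ω * Hc ω α F C₁' C₂' α) = 0 := by
    rw [Hc'_alpha (F := F), hC₁']
    ring
  have hrz := ode_zero hconv hr hαK hr0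
  -- u := h - Hc is a solution of u' = -iω u with u(α) = 0
  have hu : ∀ x ∈ Set.Icc (0:ℝ) α,
      HasDerivWithinAt (fun x => (w'' x - (ω:ℂ)^2 * w x) - Hc ω α F C₁' C₂' x)
        ((-(Complex.I * ω)) * ((w'' x - (ω:ℂ)^2 * w x) - Hc ω α F C₁' C₂' x))
        (Set.Icc (0:ℝ) α) x := by
    intro x hx
    have hd : HasDerivWithinAt (fun x => (w'' x - (ω:ℂ)^2 * w x) - Hc ω α F C₁' C₂' x)
        ((w''' x - (ω:ℂ)^2 * w' x) - Hc' ω α F C₁' C₂' x) (Set.Icc (0:ℝ) α) x :=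
      (((hw3 x hx).sub ((hw1 x hx).const_mul ((ω:ℂ)^2))).hasDerivWithinAt).sub (hq1 x hx)
    convert hd using 1
    have hzz := hrz x hx
    linear_combination -hzz
  have hu0 : (w'' α - (ω:ℂ)^2 * w α) - Hc ω α F C₁' C₂' α = 0 := by
    rw [Hc_alpha (F := F), hC₂']
    ring
  have huz := ode_zero hconv hu hαK hu0
  intro x hx
  have hfin := huz x hx
  linear_combination hfin


lemma one_sub_I_ne : (1 : ℂ) - Complex.I ≠ 0 := by
  intro h
  have := congrArg Complex.im h
  simp at this

lemma exp_negI_eq (θ : ℝ) :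
    Complex.exp (-(Complex.I * (θ : ℂ)))
      = ((Real.cos θ : ℝ) : ℂ) - ((Real.sin θ : ℝ) : ℂ) * Complex.I := by
  rw [show -(Complex.I * (θ : ℂ)) = ((-θ : ℝ) : ℂ) * Complex.I by push_cast; ring,
    Complex.exp_mul_I]
  push_cast
  rw [Complex.cos_neg, Complex.sin_neg]
  ring

lemma hGt_deriv (hα : 0 ≤ α) (hω : ω ≠ 0) (hFc : ContinuousOn F (Set.Icc 0 α)) :
    ∀ x ∈ Set.Icc 0 α, HasDerivWithinAt (Gt ω α F C₁' C₂')
      (Hc ω α F C₁' C₂' x - (ω:ℂ) * Gt ω α F C₁' C₂' x) (Set.Icc 0 α) x := by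
  intro x hx
  have hωC : (ω:ℂ) ≠ 0 := Complex.ofReal_ne_zero.mpr hω
  have hPhix := hPhi (ω := ω) hα hFc x hx
  have e1 : HasDerivAt (fun x : ℝ => Complex.exp (-(Complex.I * ((ω * (x - α) : ℝ) : ℂ))))
      (Complex.exp (-(Complex.I * ((ω * (x - α) : ℝ) : ℂ))) * (-(Complex.I * ω))) x := by
    have hinner : HasDerivAt (fun x : ℝ => -(Complex.I * ((ω * (x - α) : ℝ) : ℂ)))
        (-(Complex.I * ω)) x := by
      have hre : HasDerivAt (fun x : ℝ => ((ω * (x - α) : ℝ) : ℂ)) ((ω : ℂ)) x := by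
        have h := (((hasDerivAt_id x).sub_const α).const_mul ω).ofReal_comp
        simpa using h
      simpa using (hre.const_mul Complex.I).fun_neg
    exact hinner.cexp
  have e2 : HasDerivAt (fun x : ℝ => Complex.exp (-((ω:ℂ) * x)))
      (Complex.exp (-((ω:ℂ) * x)) * (-(ω:ℂ))) x := by
    have hinner : HasDerivAt (fun x : ℝ => -((ω:ℂ) * (x:ℂ))) (-(ω:ℂ)) x := by
      have hre : HasDerivAt (fun x : ℝ => ((x : ℝ) : ℂ)) 1 x := (hasDerivAt_id x).ofReal_comp
      simpa using (hre.const_mul (ω:ℂ)).fun_neg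
    exact hinner.cexp
  have H : HasDerivWithinAt (Gt ω α F C₁' C₂')
      (C₂' / ((1 - Complex.I) * ω) *
        (Complex.exp (-(Complex.I * ((ω * (x - α) : ℝ) : ℂ))) * (-(Complex.I * ω))
          - Complex.exp (-((ω:ℂ) * x)) * (-(ω:ℂ)) * Complex.exp (Complex.I * ((ω * α : ℝ) : ℂ)))
       + C₁' / (2 * (ω:ℂ)^2) *
        (((Real.cos (ω * (x - α)) * (ω * 1) : ℝ) : ℂ) - ((-Real.sin (ω * (x - α)) * (ω * 1) : ℝ) : ℂ)
          + Complex.exp (-((ω:ℂ) * x)) * (-(ω:ℂ))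
            * (((Real.sin (ω * α) : ℝ) : ℂ) + ((Real.cos (ω * α) : ℝ) : ℂ)))
       + (1 / (ω:ℂ)) *
        (Complex.exp (-((ω:ℂ) * x)) * (-(ω:ℂ)) * Phi ω α F x
          + Complex.exp (-((ω:ℂ) * x)) * (Complex.exp ((ω:ℂ) * x) * Jf ω α F x)))
      (Set.Icc 0 α) x := by
    have d2 := ((e1.sub (e2.mul_const (Complex.exp (Complex.I * ((ω * α : ℝ) : ℂ))))).hasDerivWithinAt
        (s := Set.Icc (0:ℝ) α)).const_mul (C₂' / ((1 - Complex.I) * (ω:ℂ)))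
    have d1 := ((((hd_sin_sub ω α x).sub (hd_cos_sub ω α x)).add
        (e2.mul_const (((Real.sin (ω * α) : ℝ) : ℂ) + ((Real.cos (ω * α) : ℝ) : ℂ)))).hasDerivWithinAt
        (s := Set.Icc (0:ℝ) α)).const_mul (C₁' / (2 * (ω:ℂ)^2))
    have d3 := (e2.hasDerivWithinAt.mul hPhix).const_mul (1 / (ω:ℂ))
    exact (d2.add d1).add d3
  convert H using 1
  have hexp1 : Complex.exp (-((ω:ℂ) * x)) * (Complex.exp ((ω:ℂ) * x) * Jf ω α F x)
      = Jf ω α F x := by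
    rw [← mul_assoc, ← Complex.exp_add]
    simp
  rw [hexp1]
  simp only [Hc, Gt, Jf]
  rw [exp_negI_eq (ω * (x - α))]
  have k2 : ((1 - Complex.I) * (ω:ℂ))⁻¹ * ((1 - Complex.I) * (ω:ℂ)) = 1 :=
    inv_mul_cancel₀ (mul_ne_zero one_sub_I_ne hωC)
  have k1 : ((2:ℂ) * (ω:ℂ)^2)⁻¹ * ((2:ℂ) * (ω:ℂ)^2) = 1 :=
    inv_mul_cancel₀ (mul_ne_zero two_ne_zero (pow_ne_zero 2 hωC))
  have kw : ((ω:ℂ))⁻¹ * (ω:ℂ) = 1 := inv_mul_cancel₀ hωC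
  linear_combination (norm := (push_cast; ring1))
    (-(C₂' * (Complex.cos ((ω:ℂ) * ((x:ℂ) - (α:ℂ)))
        - Complex.sin ((ω:ℂ) * ((x:ℂ) - (α:ℂ))) * Complex.I))) * k2
    + (-(C₁' * Complex.sin ((ω:ℂ) * ((x:ℂ) - (α:ℂ))) * ((ω:ℂ))⁻¹)) * k1
    + (2 * (ω:ℂ) * ((2:ℂ) * (ω:ℂ)^2)⁻¹ * C₁' * Complex.sin ((ω:ℂ) * ((x:ℂ) - (α:ℂ)))
        - Complex.I * C₂' * Complex.sin ((ω:ℂ) * ((x:ℂ) - (α:ℂ)))) * kw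


lemma Gt_zero : Gt ω α F C₁' C₂' 0 = 0 := by
  have h1 : -(Complex.I * ((ω * ((0:ℝ) - α) : ℝ) : ℂ)) = Complex.I * ((ω * α : ℝ) : ℂ) := by
    push_cast
    ring
  have h2 : (ω * ((0:ℝ) - α) : ℝ) = -(ω * α) := by ring
  have h3 : -((ω:ℂ) * ((0:ℝ):ℂ)) = 0 := by
    push_cast
    ring
  simp only [Gt, Phi, intervalIntegral.integral_same, h1, h2, h3, Complex.exp_zero,
    Real.sin_neg, Real.cos_neg]
  push_cast
  ring_nf

lemma inner_integral_eq (hα : 0 ≤ α) (hFc : ContinuousOn F (Set.Icc 0 α))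
    {x τ : ℝ} (hτ : τ ∈ Set.Icc 0 α) :
    (∫ s in α..τ, ((Real.exp (-(ω * (x - τ))) * Real.sin (ω * (τ - s)) : ℝ) : ℂ) * F s)
      = Complex.exp (-((ω:ℂ) * x)) * (Complex.exp ((ω:ℂ) * τ) * Jf ω α F τ) := by
  have hαK : α ∈ Set.Icc (0:ℝ) α := ⟨hα, le_refl α⟩
  have h1 : (fun s => ((Real.exp (-(ω * (x - τ))) * Real.sin (ω * (τ - s)) : ℝ) : ℂ) * F s)
      = fun s => ((Real.exp (-(ω * (x - τ))) : ℝ) : ℂ)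
          * (((Real.sin (ω * (τ - s)) : ℝ) : ℂ) * F s) := by
    funext s
    push_cast
    ring
  rw [h1, intervalIntegral.integral_const_mul]
  have hint1 : IntervalIntegrable (fun s => ((Real.cos (ω * s) : ℝ) : ℂ) * F s) MeasureTheory.volume α τ :=
    ((contA hFc).mono (uIcc_subset_Icc hαK hτ)).intervalIntegrable
  have hint2 : IntervalIntegrable (fun s => ((Real.sin (ω * s) : ℝ) : ℂ) * F s) MeasureTheory.volume α τ :=
    ((contB hFc).mono (uIcc_subset_Icc hαK hτ)).intervalIntegrable
  have h2 : (∫ s in α..τ, ((Real.sin (ω * (τ - s)) : ℝ) : ℂ) * F s) = Jf ω α F τ := by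
    have h3 : (fun s => ((Real.sin (ω * (τ - s)) : ℝ) : ℂ) * F s)
        = fun s => ((Real.sin (ω * τ) : ℝ) : ℂ) * (((Real.cos (ω * s) : ℝ) : ℂ) * F s)
            - ((Real.cos (ω * τ) : ℝ) : ℂ) * (((Real.sin (ω * s) : ℝ) : ℂ) * F s) := by
      funext s
      rw [show ω * (τ - s) = ω * τ - ω * s by ring, Real.sin_sub]
      push_cast
      ring
    rw [h3, intervalIntegral.integral_sub (hint1.const_mul _) (hint2.const_mul _),
      intervalIntegral.integral_const_mul, intervalIntegral.integral_const_mul]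
    rfl
  rw [h2, show ((Real.exp (-(ω * (x - τ))) : ℝ) : ℂ)
      = Complex.exp (-((ω:ℂ) * x)) * Complex.exp ((ω:ℂ) * τ) by
    rw [Complex.ofReal_exp, ← Complex.exp_add]
    push_cast
    ring_nf]
  rw [mul_assoc]

lemma T3_eq (hα : 0 ≤ α) (hFc : ContinuousOn F (Set.Icc 0 α))
    {x : ℝ} (hx : x ∈ Set.Icc 0 α) :
    (∫ τ in (0:ℝ)..x, ∫ s in α..τ,
        ((Real.exp (-(ω * (x - τ))) * Real.sin (ω * (τ - s)) : ℝ) : ℂ) * F s)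
      = Complex.exp (-((ω:ℂ) * x)) * Phi ω α F x := by
  have h0K : (0:ℝ) ∈ Set.Icc (0:ℝ) α := ⟨le_refl 0, hα⟩
  have hcong : ∀ τ ∈ Set.uIcc (0:ℝ) x,
      (∫ s in α..τ, ((Real.exp (-(ω * (x - τ))) * Real.sin (ω * (τ - s)) : ℝ) : ℂ) * F s)
        = Complex.exp (-((ω:ℂ) * x)) * (Complex.exp ((ω:ℂ) * τ) * Jf ω α F τ) := by
    intro τ hτ
    exact inner_integral_eq hα hFc (uIcc_subset_Icc h0K hx hτ)
  rw [intervalIntegral.integral_congr hcong, intervalIntegral.integral_const_mul]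
  rfl

end

end Stmt11Aux

/-- Representation of `w' - ωw` for a clamped beam function (`w(0) = w'(0) = 0`)
in terms of the data `C₁'`, `C₂'` at `α` and the source `F = w'''' - ω⁴w`. -/
theorem stmt_11 (α ω : ℝ) (hα : 0 < α) (hω : 0 < ω)
    (w w' w'' w''' w'''' : ℝ → ℂ)
    (hw1 : ∀ x ∈ Set.Icc (0:ℝ) α, HasDerivAt w (w' x) x)
    (hw2 : ∀ x ∈ Set.Icc (0:ℝ) α, HasDerivAt w' (w'' x) x)
    (hw3 : ∀ x ∈ Set.Icc (0:ℝ) α, HasDerivAt w'' (w''' x) x)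
    (hw4 : ∀ x ∈ Set.Icc (0:ℝ) α, HasDerivAt w''' (w'''' x) x)
    (hcont : ContinuousOn w'''' (Set.Icc (0:ℝ) α))
    (hbc0 : w 0 = 0) (hbc1 : w' 0 = 0)
    (F : ℝ → ℂ) (hF : ∀ x, F x = w'''' x - (ω:ℂ)^4 * w x)
    (C₁' C₂' : ℂ)
    (hC₁' : C₁' = w''' α + Complex.I * (ω:ℂ) * w'' α - (ω:ℂ)^2 * w' α
                   - Complex.I * (ω:ℂ)^3 * w α)
    (hC₂' : C₂' = w'' α - (ω:ℂ)^2 * w α) :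
    ∀ x ∈ Set.Icc (0:ℝ) α,
      w' x - (ω:ℂ) * w x
        = C₂' / ((1 - Complex.I) * (ω:ℂ))
            * (Complex.exp (-(Complex.I * ((ω * (x - α) : ℝ) : ℂ)))
               - ((Real.exp (-(ω * x)) : ℝ) : ℂ)
                 * Complex.exp (Complex.I * ((ω * α : ℝ) : ℂ)))
          + C₁' / (2 * (ω:ℂ)^2)
            * ((Real.sin (ω * (x - α)) - Real.cos (ω * (x - α))
                + Real.exp (-(ω * x)) * (Real.sin (ω * α) + Real.cos (ω * α)) : ℝ) : ℂ)
          + (1 / (ω:ℂ))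
            * ∫ τ in (0:ℝ)..x, ∫ s in α..τ,
                ((Real.exp (-(ω * (x - τ))) * Real.sin (ω * (τ - s)) : ℝ) : ℂ) * F s := by
  have hα' : (0:ℝ) ≤ α := le_of_lt hα
  have hω' : ω ≠ 0 := ne_of_gt hω
  have hωC : (ω:ℂ) ≠ 0 := Complex.ofReal_ne_zero.mpr hω'
  have hFc : ContinuousOn F (Set.Icc 0 α) := by
    have hFeq : F = fun x => w'''' x - (ω:ℂ)^4 * w x := funext hF
    rw [hFeq]
    exact hcont.sub (continuousOn_const.mul
      (fun x hx => (hw1 x hx).continuousAt.continuousWithinAt))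
  have hSA := Stmt11Aux.stepA hα' hω' hFc w w' w'' w''' w'''' hw1 hw2 hw3 hw4 hF hC₁' hC₂'
  have hGd := Stmt11Aux.hGt_deriv (C₁' := C₁') (C₂' := C₂') hα' hω' hFc
  -- the difference satisfies Δ' = -ω Δ with Δ 0 = 0
  have hΔ : ∀ y ∈ Set.Icc (0:ℝ) α,
      HasDerivWithinAt (fun y => (w' y - (ω:ℂ) * w y) - Stmt11Aux.Gt ω α F C₁' C₂' y)
        ((-(ω:ℂ)) * ((w' y - (ω:ℂ) * w y) - Stmt11Aux.Gt ω α F C₁' C₂' y))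
        (Set.Icc (0:ℝ) α) y := by
    intro y hy
    have h1 : HasDerivWithinAt (fun y => w' y - (ω:ℂ) * w y)
        (w'' y - (ω:ℂ) * w' y) (Set.Icc (0:ℝ) α) y :=
      ((hw2 y hy).sub ((hw1 y hy).const_mul ((ω:ℂ)))).hasDerivWithinAt
    have h2 := h1.sub (hGd y hy)
    refine h2.congr_deriv (Eq.symm ?_)
    have h3 := hSA y hy
    linear_combination -h3
  have hΔ0 : (w' 0 - (ω:ℂ) * w 0) - Stmt11Aux.Gt ω α F C₁' C₂' 0 = 0 := by
    rw [hbc0, hbc1, Stmt11Aux.Gt_zero]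
    ring
  have hz := Stmt11Aux.ode_zero (convex_Icc _ _) hΔ ⟨le_refl 0, hα'⟩ hΔ0
  intro x hx
  have hx0 := hz x hx
  have hGteq : w' x - (ω:ℂ) * w x = Stmt11Aux.Gt ω α F C₁' C₂' x := by
    linear_combination hx0
  rw [hGteq, Stmt11Aux.Gt]
  rw [Stmt11Aux.T3_eq hα' hFc hx]
  push_cast
  ring
end

section
/- Let α > 0, let ω > 0, let w : ℝ → ℂ be four times continuously differentiable on [0, α] with w(0) = 0 and w'(0) = 0, and set F(x) = w''''(x) - ω⁴·w(x), C₁' = w'''(α) + i·ω·w''(α) - ω²·w'(α) - i·ω³·w(α), and C₂' = w''(α) - ω²·w(α). Then: 2·ω·w'(α) - 2·ω²·w(α) = (1 + i)·C₂'·(1 - exp(-α·ω)·exp(i·α·ω)) + (C₁'/ω)·(exp(-α·ω)·(sin(α·ω) + cos(α·ω)) - 1) + 2·∫₀^α ∫_α^τ exp(-ω·(α - τ))·sin(ω·(τ - s))·F(s) ds dτ. -/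
open Complex intervalIntegral

/-- Identity expressing the boundary combination `2ω·w'(α) - 2ω²·w(α)` of a clamped
(`w(0) = w'(0) = 0`) function in terms of `C₁'`, `C₂'` and the source `F = w'''' - ω⁴w`. -/
theorem stmt_12 (α ω : ℝ) (hα : 0 < α) (hω : 0 < ω)
    (w w' w'' w''' w'''' : ℝ → ℂ)
    (hw1 : ∀ x ∈ Set.Icc (0:ℝ) α, HasDerivAt w (w' x) x)
    (hw2 : ∀ x ∈ Set.Icc (0:ℝ) α, HasDerivAt w' (w'' x) x)
    (hw3 : ∀ x ∈ Set.Icc (0:ℝ) α, HasDerivAt w'' (w''' x) x)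
    (hw4 : ∀ x ∈ Set.Icc (0:ℝ) α, HasDerivAt w''' (w'''' x) x)
    (hcont : ContinuousOn w'''' (Set.Icc (0:ℝ) α))
    (hbc0 : w 0 = 0) (hbc1 : w' 0 = 0)
    (F : ℝ → ℂ) (hF : ∀ x, F x = w'''' x - (ω:ℂ)^4 * w x)
    (C₁' C₂' : ℂ)
    (hC₁' : C₁' = w''' α + Complex.I * (ω:ℂ) * w'' α - (ω:ℂ)^2 * w' α
                   - Complex.I * (ω:ℂ)^3 * w α)
    (hC₂' : C₂' = w'' α - (ω:ℂ)^2 * w α) :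
    2 * (ω:ℂ) * w' α - 2 * (ω:ℂ)^2 * w α
      = (1 + Complex.I) * C₂'
          * (1 - ((Real.exp (-(α * ω)) : ℝ) : ℂ)
                 * Complex.exp (Complex.I * ((α * ω : ℝ) : ℂ)))
        + C₁' / (ω:ℂ)
          * ((Real.exp (-(α * ω)) * (Real.sin (α * ω) + Real.cos (α * ω)) - 1 : ℝ) : ℂ)
        + 2 * ∫ τ in (0:ℝ)..α, ∫ s in α..τ,
            ((Real.exp (-(ω * (α - τ))) * Real.sin (ω * (τ - s)) : ℝ) : ℂ) * F s := by
  have hω0 : (ω:ℂ) ≠ 0 := by exact_mod_cast hω.ne'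
  have hIcc : Set.uIcc (0:ℝ) α = Set.Icc 0 α := Set.uIcc_of_le hα.le
  -- continuity facts
  have hcw : ContinuousOn w (Set.Icc 0 α) :=
    fun x hx => (hw1 x hx).continuousAt.continuousWithinAt
  have hcw1 : ContinuousOn w' (Set.Icc 0 α) :=
    fun x hx => (hw2 x hx).continuousAt.continuousWithinAt
  have hcw2 : ContinuousOn w'' (Set.Icc 0 α) :=
    fun x hx => (hw3 x hx).continuousAt.continuousWithinAt
  have hcw3 : ContinuousOn w''' (Set.Icc 0 α) :=
    fun x hx => (hw4 x hx).continuousAt.continuousWithinAt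
  have hFeq : F = fun x => w'''' x - (ω:ℂ)^4 * w x := funext hF
  have hcF : ContinuousOn F (Set.Icc 0 α) := by
    rw [hFeq]; exact hcont.sub (continuousOn_const.mul hcw)
  -- the inner integral, by an explicit antiderivative
  have inner : ∀ τ ∈ Set.Icc (0:ℝ) α,
      (∫ s in α..τ, ((Real.exp (-(ω * (α - τ))) * Real.sin (ω * (τ - s)) : ℝ) : ℂ) * F s)
      = ((Real.exp (-(ω * (α - τ))) : ℝ) : ℂ) *
        ((ω:ℂ) * (w'' τ - (ω:ℂ)^2 * w τ)
          - ((Real.sin (ω * (τ - α)) : ℝ) : ℂ) * (w''' α - (ω:ℂ)^2 * w' α)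
          - (ω:ℂ) * (((Real.cos (ω * (τ - α)) : ℝ) : ℂ) * (w'' α - (ω:ℂ)^2 * w α))) := by
    intro τ hτ
    have hsub : Set.uIcc α τ ⊆ Set.Icc 0 α := by
      rw [Set.uIcc_of_ge hτ.2]; exact Set.Icc_subset_Icc hτ.1 le_rfl
    have key : ∀ s ∈ Set.uIcc α τ,
        HasDerivAt (fun s => ((Real.sin (ω * (τ - s)) : ℝ) : ℂ) * (w''' s - (ω:ℂ)^2 * w' s)
          + (ω:ℂ) * (((Real.cos (ω * (τ - s)) : ℝ) : ℂ) * (w'' s - (ω:ℂ)^2 * w s)))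
          (((Real.sin (ω * (τ - s)) : ℝ) : ℂ) * F s) s := by
      intro s hs
      have hs' := hsub hs
      have hlin : HasDerivAt (fun s : ℝ => ω * (τ - s)) (-ω) s := by
        simpa using ((hasDerivAt_id s).const_sub τ).const_mul ω
      have hsin : HasDerivAt (fun s : ℝ => Real.sin (ω * (τ - s)))
          (Real.cos (ω * (τ - s)) * (-ω)) s := (Real.hasDerivAt_sin _).comp s hlin
      have hcos : HasDerivAt (fun s : ℝ => Real.cos (ω * (τ - s)))
          (-Real.sin (ω * (τ - s)) * (-ω)) s := (Real.hasDerivAt_cos _).comp s hlin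
      have hv' : HasDerivAt (fun s => w''' s - (ω:ℂ)^2 * w' s)
          (w'''' s - (ω:ℂ)^2 * w'' s) s := (hw4 s hs').sub ((hw2 s hs').const_mul _)
      have hv : HasDerivAt (fun s => w'' s - (ω:ℂ)^2 * w s)
          (w''' s - (ω:ℂ)^2 * w' s) s := (hw3 s hs').sub ((hw1 s hs').const_mul _)
      have hD := (hsin.ofReal_comp.mul hv').add ((hcos.ofReal_comp.mul hv).const_mul (ω:ℂ))
      refine hD.congr_deriv ?_
      rw [hF]; push_cast; ring
    have hint : IntervalIntegrable (fun s => ((Real.sin (ω * (τ - s)) : ℝ) : ℂ) * F s)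
        MeasureTheory.volume α τ := by
      apply ContinuousOn.intervalIntegrable
      apply ContinuousOn.mul
      · exact (Complex.continuous_ofReal.comp (Real.continuous_sin.comp
          (by fun_prop))).continuousOn
      · exact hcF.mono hsub
    have hFTC := intervalIntegral.integral_eq_sub_of_hasDerivAt key hint
    have hpull : (∫ s in α..τ, ((Real.exp (-(ω * (α - τ))) * Real.sin (ω * (τ - s)) : ℝ) : ℂ) * F s)
        = ((Real.exp (-(ω * (α - τ))) : ℝ) : ℂ) *
          ∫ s in α..τ, ((Real.sin (ω * (τ - s)) : ℝ) : ℂ) * F s := by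
      rw [← intervalIntegral.integral_const_mul]
      apply intervalIntegral.integral_congr
      intro s _
      push_cast; ring
    rw [hpull, hFTC]
    have e2 : ω * (τ - τ) = 0 := by ring
    simp only [e2, Real.sin_zero, Real.cos_zero]
    push_cast
    ring
  -- outer antiderivative
  set Cv : ℂ := w'' α - (ω:ℂ)^2 * w α with hCv
  set C1v : ℂ := w''' α - (ω:ℂ)^2 * w' α with hC1v
  set G : ℝ → ℂ := fun τ => ((Real.exp (-(ω * (α - τ))) : ℝ) : ℂ) *
      ((ω:ℂ) * (w' τ - (ω:ℂ) * w τ)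
        - C1v / (2*(ω:ℂ)) * (((Real.sin (ω * (τ - α)) : ℝ) : ℂ) - ((Real.cos (ω * (τ - α)) : ℝ) : ℂ))
        - Cv / 2 * (((Real.cos (ω * (τ - α)) : ℝ) : ℂ) + ((Real.sin (ω * (τ - α)) : ℝ) : ℂ))) with hG
  have houter :
      (∫ τ in (0:ℝ)..α, ((Real.exp (-(ω * (α - τ))) : ℝ) : ℂ) *
        ((ω:ℂ) * (w'' τ - (ω:ℂ)^2 * w τ)
          - ((Real.sin (ω * (τ - α)) : ℝ) : ℂ) * C1v
          - (ω:ℂ) * (((Real.cos (ω * (τ - α)) : ℝ) : ℂ) * Cv)))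
      = G α - G 0 := by
    apply intervalIntegral.integral_eq_sub_of_hasDerivAt
    · intro τ hτ
      have hτ' : τ ∈ Set.Icc 0 α := hIcc ▸ hτ
      have hlin : HasDerivAt (fun τ : ℝ => -(ω * (α - τ))) ω τ := by
        exact ((((hasDerivAt_id τ).const_sub α).const_mul ω).neg :
          HasDerivAt (fun y : ℝ => -(ω * (α - id y))) (-(ω * -1)) τ).congr_deriv (by ring)
      have hexp : HasDerivAt (fun τ : ℝ => Real.exp (-(ω * (α - τ))))
          (Real.exp (-(ω * (α - τ))) * ω) τ := (Real.hasDerivAt_exp _).comp τ hlin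
      have hlin2 : HasDerivAt (fun τ : ℝ => ω * (τ - α)) ω τ := by
        simpa using ((hasDerivAt_id τ).sub_const α).const_mul ω
      have hsin : HasDerivAt (fun τ : ℝ => Real.sin (ω * (τ - α)))
          (Real.cos (ω * (τ - α)) * ω) τ := (Real.hasDerivAt_sin _).comp τ hlin2
      have hcos : HasDerivAt (fun τ : ℝ => Real.cos (ω * (τ - α)))
          (-Real.sin (ω * (τ - α)) * ω) τ := (Real.hasDerivAt_cos _).comp τ hlin2
      have hwp : HasDerivAt (fun τ => w' τ - (ω:ℂ) * w τ)
          (w'' τ - (ω:ℂ) * w' τ) τ := (hw2 τ hτ').sub ((hw1 τ hτ').const_mul _)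
      have hbr := ((hwp.const_mul (ω:ℂ)).sub
          (((hsin.ofReal_comp).sub (hcos.ofReal_comp)).const_mul (C1v / (2*(ω:ℂ))))).sub
          (((hcos.ofReal_comp).add (hsin.ofReal_comp)).const_mul (Cv / 2))
      have hD := hexp.ofReal_comp.mul hbr
      rw [hG]
      refine hD.congr_deriv ?_
      simp only [Pi.sub_apply, Pi.add_apply]
      push_cast
      field_simp
      ring
    · apply ContinuousOn.intervalIntegrable
      rw [hIcc]
      apply ContinuousOn.mul
      · exact (Complex.continuous_ofReal.comp (Real.continuous_exp.comp
          (by fun_prop))).continuousOn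
      · apply ContinuousOn.sub
        apply ContinuousOn.sub
        · exact continuousOn_const.mul (hcw2.sub (continuousOn_const.mul hcw))
        · exact ((Complex.continuous_ofReal.comp (Real.continuous_sin.comp
            (by fun_prop))).continuousOn).mul continuousOn_const
        · exact continuousOn_const.mul
            (((Complex.continuous_ofReal.comp (Real.continuous_cos.comp
              (by fun_prop))).continuousOn).mul continuousOn_const)
  have hdouble : (∫ τ in (0:ℝ)..α, ∫ s in α..τ,
      ((Real.exp (-(ω * (α - τ))) * Real.sin (ω * (τ - s)) : ℝ) : ℂ) * F s) = G α - G 0 := by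
    rw [← houter]
    apply intervalIntegral.integral_congr
    intro τ hτ
    exact inner τ (hIcc ▸ hτ)
  rw [hdouble, hC₁', hC₂', hG]
  have e1 : -(ω * (α - α)) = 0 := by ring
  have e2 : ω * (α - α) = 0 := by ring
  have e3 : -(ω * (α - 0)) = -(α * ω) := by ring
  have e4 : ω * ((0:ℝ) - α) = -(α * ω) := by ring
  simp only [e1, e2, e3, e4, Real.exp_zero, Real.sin_zero, Real.cos_zero,
    Real.sin_neg, Real.cos_neg, hbc0, hbc1]
  rw [mul_comm Complex.I ((α * ω : ℝ) : ℂ), Complex.exp_mul_I,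
    ← Complex.ofReal_cos, ← Complex.ofReal_sin, hC1v, hCv]
  push_cast
  field_simp
  ring_nf
  simp only [Complex.I_sq, Complex.exp_zero]
  ring
end

section
/- Let a < b be real numbers and let u : ℝ → ℂ be continuously differentiable on [a, b]. Then |u(a)|² ≤ (1/(b - a))·∫_a^b |u(x)|² dx + 2·(∫_a^b |u(x)|² dx)^{1/2}·(∫_a^b |u'(x)|² dx)^{1/2}. -/
open Complex intervalIntegral

/-- One-dimensional trace estimate: the boundary value `|u(a)|²` is bounded by the
`L²` norms of `u` and `u'` on `(a, b)`. -/
theorem stmt_13 (a b : ℝ) (hab : a < b)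
    (u u' : ℝ → ℂ)
    (hu : ∀ x ∈ Set.Icc a b, HasDerivAt u (u' x) x)
    (hcont : ContinuousOn u' (Set.Icc a b)) :
    ‖u a‖^2
      ≤ 1 / (b - a) * (∫ x in a..b, ‖u x‖^2)
        + 2 * Real.sqrt (∫ x in a..b, ‖u x‖^2)
            * Real.sqrt (∫ x in a..b, ‖u' x‖^2) := by
  have hba : (0:ℝ) < b - a := by linarith
  -- continuity of u on Icc
  have hcu : ContinuousOn u (Set.Icc a b) := fun x hx =>
    (hu x hx).continuousAt.continuousWithinAt
  set F : ℝ → ℝ := fun x => ‖u x‖ ^ 2 with hF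
  set F' : ℝ → ℝ := fun x => 2 * ((starRingEnd ℂ) (u x) * u' x).re with hF'
  -- derivative of F
  have hFderiv : ∀ x ∈ Set.Icc a b, HasDerivAt F (F' x) x := by
    intro x hx
    have hre : HasDerivAt (fun t => (u t).re) ((u' x).re) x :=
      (Complex.reCLM.hasFDerivAt.comp_hasDerivAt x (hu x hx))
    have him : HasDerivAt (fun t => (u t).im) ((u' x).im) x :=
      (Complex.imCLM.hasFDerivAt.comp_hasDerivAt x (hu x hx))
    have h1 : HasDerivAt (fun t => (u t).re ^ 2 + (u t).im ^ 2)
        (2 * (u x).re * (u' x).re + 2 * (u x).im * (u' x).im) x := by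
      have := ((hre.fun_pow 2).fun_add (him.fun_pow 2))
      simpa [mul_comm, mul_assoc, mul_left_comm] using this
    have heq : F = fun t => (u t).re ^ 2 + (u t).im ^ 2 := by
      funext t
      show ‖u t‖ ^ 2 = _
      rw [Complex.sq_norm, Complex.normSq_apply]; ring
    have heq2 : F' x = 2 * (u x).re * (u' x).re + 2 * (u x).im * (u' x).im := by
      simp [hF', Complex.mul_re]
      ring
    rw [heq, heq2]
    exact h1
  -- bound on |F'|
  have hFbound : ∀ x, |F' x| ≤ 2 * (‖u x‖ * ‖u' x‖) := by
    intro x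
    have h1 : |((starRingEnd ℂ) (u x) * u' x).re| ≤ ‖(starRingEnd ℂ) (u x) * u' x‖ :=
      Complex.abs_re_le_norm _
    have h2 : ‖(starRingEnd ℂ) (u x) * u' x‖
        = ‖u x‖ * ‖u' x‖ := by
      rw [norm_mul, Complex.norm_conj]
    calc |F' x| = 2 * |((starRingEnd ℂ) (u x) * u' x).re| := by
          rw [hF', abs_mul]; norm_num
      _ ≤ 2 * (‖u x‖ * ‖u' x‖) := by
          rw [← h2]; linarith
  -- continuity of F'
  have hcF' : ContinuousOn F' (Set.Icc a b) := by
    apply ContinuousOn.mul continuousOn_const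
    exact (Complex.continuous_re.comp_continuousOn
      (((Complex.continuous_conj.comp_continuousOn hcu)).mul hcont))
  have hcF : ContinuousOn F (Set.Icc a b) := ((continuous_norm.comp_continuousOn hcu).pow 2)
  -- FTC on [a, y]
  have key : ∀ y ∈ Set.Icc a b, ∫ x in a..y, F' x = F y - F a := by
    intro y hy
    apply intervalIntegral.integral_eq_sub_of_hasDerivAt
    · intro x hx
      apply hFderiv
      rw [Set.uIcc_of_le hy.1] at hx
      exact ⟨hx.1, hx.2.trans hy.2⟩
    · apply (hcF'.mono _).intervalIntegrable
      rw [Set.uIcc_of_le hy.1]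
      exact Set.Icc_subset_Icc le_rfl hy.2
  set C : ℝ := ∫ x in a..b, |F' x| with hC
  have hintF' : IntervalIntegrable (fun x => |F' x|) MeasureTheory.volume a b :=
    (hcF'.abs.mono (by rw [Set.uIcc_of_le hab.le])).intervalIntegrable
  -- pointwise bound F a ≤ F y + C
  have step : ∀ y ∈ Set.Icc a b, F a ≤ F y + C := by
    intro y hy
    have h1 : F a = F y - ∫ x in a..y, F' x := by rw [key y hy]; ring
    have h2 : |∫ x in a..y, F' x| ≤ ∫ x in a..y, |F' x| :=
      intervalIntegral.abs_integral_le_integral_abs hy.1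
    have h3 : (∫ x in a..y, |F' x|) ≤ C := by
      apply intervalIntegral.integral_mono_interval le_rfl hy.1 hy.2
      · filter_upwards with x using abs_nonneg _
      · exact hintF'
    have := abs_le.mp (h2.trans h3)
    linarith [this.1, this.2]
  -- averaging over y
  have havg : F a ≤ 1 / (b - a) * (∫ x in a..b, F x) + C := by
    have hmono : ∫ y in a..b, (F a - C) ≤ ∫ y in a..b, F y := by
      apply intervalIntegral.integral_mono_on hab.le (intervalIntegrable_const)
        ((hcF.mono (by rw [Set.uIcc_of_le hab.le])).intervalIntegrable)
      intro y hy
      linarith [step y hy]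
    rw [intervalIntegral.integral_const, smul_eq_mul] at hmono
    rw [div_mul_eq_mul_div, ← sub_le_iff_le_add, le_div_iff₀ hba, one_mul]
    nlinarith [hmono]
  -- bound C via pointwise bound then Cauchy-Schwarz
  have hCle : C ≤ 2 * ∫ x in a..b, ‖u x‖ * ‖u' x‖ := by
    rw [hC, ← intervalIntegral.integral_const_mul]
    apply intervalIntegral.integral_mono_on hab.le hintF'
    · apply ContinuousOn.intervalIntegrable
      rw [Set.uIcc_of_le hab.le]
      exact continuousOn_const.mul ((continuous_norm.comp_continuousOn hcu).mul
        (continuous_norm.comp_continuousOn hcont))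
    · intro x _
      simpa [mul_assoc] using hFbound x
  -- Cauchy-Schwarz
  obtain ⟨M, hM⟩ := isCompact_Icc.exists_bound_of_continuousOn hcu
  obtain ⟨M', hM'⟩ := isCompact_Icc.exists_bound_of_continuousOn hcont
  set μ := MeasureTheory.volume.restrict (Set.Ioc a b) with hμ
  have hmemu : MeasureTheory.MemLp (fun x => ‖u x‖) (ENNReal.ofReal 2) μ := by
    apply MeasureTheory.MemLp.of_bound _ M
    · apply MeasureTheory.ae_restrict_of_forall_mem measurableSet_Ioc
      intro x hx
      simpa using hM x (Set.Ioc_subset_Icc_self hx)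
    · exact ((continuous_norm.comp_continuousOn
        (hcu.mono Set.Ioc_subset_Icc_self)).aestronglyMeasurable measurableSet_Ioc)
  have hmemu' : MeasureTheory.MemLp (fun x => ‖u' x‖) (ENNReal.ofReal 2) μ := by
    apply MeasureTheory.MemLp.of_bound _ M'
    · apply MeasureTheory.ae_restrict_of_forall_mem measurableSet_Ioc
      intro x hx
      simpa using hM' x (Set.Ioc_subset_Icc_self hx)
    · exact ((continuous_norm.comp_continuousOn
        (hcont.mono Set.Ioc_subset_Icc_self)).aestronglyMeasurable measurableSet_Ioc)
  have hpq : (2:ℝ).HolderConjugate 2 := by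
    exact Real.HolderConjugate.two_two
  have hCS := MeasureTheory.integral_mul_le_Lp_mul_Lq_of_nonneg hpq
    (MeasureTheory.ae_of_all μ fun x => norm_nonneg (u x))
    (MeasureTheory.ae_of_all μ fun x => norm_nonneg (u' x)) hmemu hmemu'
  have hconv : ∀ v : ℝ → ℂ, (∫ x, ‖v x‖ ^ (2:ℝ) ∂μ) ^ ((1:ℝ)/2)
      = Real.sqrt (∫ x in a..b, ‖v x‖ ^ 2) := by
    intro v
    rw [Real.sqrt_eq_rpow, intervalIntegral.integral_of_le hab.le]
    congr 1
    apply MeasureTheory.integral_congr_ae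
    filter_upwards with x
    rw [Real.rpow_two]
  rw [hconv u, hconv u'] at hCS
  have hint_eq : (∫ x in a..b, ‖u x‖ * ‖u' x‖)
      = ∫ x, ‖u x‖ * ‖u' x‖ ∂μ :=
    intervalIntegral.integral_of_le hab.le
  have hfinal : C ≤ 2 * Real.sqrt (∫ x in a..b, ‖u x‖ ^ 2)
      * Real.sqrt (∫ x in a..b, ‖u' x‖ ^ 2) := by
    rw [mul_assoc]
    calc C ≤ 2 * ∫ x in a..b, ‖u x‖ * ‖u' x‖ := hCle
      _ ≤ _ := by
          rw [hint_eq]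
          exact mul_le_mul_of_nonneg_left hCS (by norm_num)
  calc ‖u a‖ ^ 2 = F a := rfl
    _ ≤ 1 / (b - a) * (∫ x in a..b, F x) + C := havg
    _ ≤ _ := by exact add_le_add_right hfinal _
end

section
/- Let α > 0, let ω > 0, and let f : ℝ → ℂ be continuous on [0, α]. Then |ω²·∫₀^α (∫₀^s exp(-ω·(α - τ))·sin(ω·(τ - s)) dτ)·f(s) ds| ≤ (α·ω·exp(-α·ω) + 1/2 - exp(-α·ω)/2)·max_{s ∈ [0, α]} |f(s)|. -/
open Complex intervalIntegral

lemma inner_eq (α ω s : ℝ) (hω : 0 < ω) :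
    (∫ τ in (0:ℝ)..s, Real.exp (-(ω * (α - τ))) * Real.sin (ω * (τ - s)))
      = Real.exp (-(ω*α)) * (Real.cos (ω*s) + Real.sin (ω*s) - Real.exp (ω*s)) / (2*ω) := by
  have key : ∀ τ : ℝ, HasDerivAt
      (fun τ => Real.exp (-(ω*α)) * Real.exp (ω*τ) * (Real.sin (ω*τ - ω*s) - Real.cos (ω*τ - ω*s)) / (2*ω))
      (Real.exp (-(ω * (α - τ))) * Real.sin (ω * (τ - s))) τ := by
    intro τ
    have hlin : HasDerivAt (fun τ : ℝ => ω*τ) ω τ := by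
      simpa using (hasDerivAt_id τ).const_mul ω
    have hlin2 : HasDerivAt (fun τ : ℝ => ω*τ - ω*s) ω τ := hlin.sub_const _
    have he : HasDerivAt (fun τ : ℝ => Real.exp (ω*τ)) (ω * Real.exp (ω*τ)) τ := by
      simpa [mul_comm] using hlin.exp
    have hs : HasDerivAt (fun τ : ℝ => Real.sin (ω*τ - ω*s)) (Real.cos (ω*τ - ω*s) * ω) τ := hlin2.sin
    have hc : HasDerivAt (fun τ : ℝ => Real.cos (ω*τ - ω*s)) (-Real.sin (ω*τ - ω*s) * ω) τ := hlin2.cos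
    have := (((he.const_mul (Real.exp (-(ω*α)))).mul (hs.sub hc)).div_const (2*ω))
    refine this.congr_deriv ?_
    have hexp : Real.exp (-(ω * (α - τ))) = Real.exp (-(ω*α)) * Real.exp (ω*τ) := by
      rw [← Real.exp_add]; ring_nf
    rw [hexp]
    have h2 : ω * (τ - s) = ω*τ - ω*s := by ring
    rw [h2]
    simp only [Pi.sub_apply]
    field_simp
    ring
  rw [intervalIntegral.integral_eq_sub_of_hasDerivAt (fun τ _ => key τ) (by
    apply Continuous.intervalIntegrable
    continuity)]
  simp [Real.sin_neg, Real.cos_neg, mul_comm]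
  field_simp
  ring

/-- Estimate of the oscillatory double integral against the sup norm of `f` on `[0, α]`. -/
theorem stmt_15 (α ω : ℝ) (hα : 0 < α) (hω : 0 < ω)
    (f : ℝ → ℂ) (hf : ContinuousOn f (Set.Icc (0:ℝ) α)) :
    ‖(ω:ℂ)^2
        * ∫ s in (0:ℝ)..α,
            ((∫ τ in (0:ℝ)..s, Real.exp (-(ω * (α - τ))) * Real.sin (ω * (τ - s)) : ℝ) : ℂ)
              * f s‖
      ≤ (α * ω * Real.exp (-(α * ω)) + 1/2 - Real.exp (-(α * ω)) / 2)
          * sSup ((fun s => ‖f s‖) '' Set.Icc (0:ℝ) α) := by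
  set M := sSup ((fun s => ‖f s‖) '' Set.Icc (0:ℝ) α) with hMdef
  have huIcc : Set.uIcc (0:ℝ) α = Set.Icc 0 α := Set.uIcc_of_le hα.le
  have hcontabs : ContinuousOn (fun s => ‖f s‖) (Set.Icc (0:ℝ) α) :=
    continuous_norm.comp_continuousOn hf
  have hbdd : BddAbove ((fun s => ‖f s‖) '' Set.Icc (0:ℝ) α) :=
    (isCompact_Icc.image_of_continuousOn hcontabs).bddAbove
  have hM : ∀ s ∈ Set.Icc (0:ℝ) α, ‖f s‖ ≤ M :=
    fun s hs => le_csSup hbdd ⟨s, hs, rfl⟩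
  have hM0 : 0 ≤ M := le_trans (norm_nonneg _) (hM 0 ⟨le_refl _, hα.le⟩)
  -- rewrite the outer integral using the closed form
  have hcong : (∫ s in (0:ℝ)..α,
      ((∫ τ in (0:ℝ)..s, Real.exp (-(ω * (α - τ))) * Real.sin (ω * (τ - s)) : ℝ) : ℂ) * f s)
    = ∫ s in (0:ℝ)..α,
      ((Real.exp (-(ω*α)) * (Real.cos (ω*s) + Real.sin (ω*s) - Real.exp (ω*s)) / (2*ω) : ℝ) : ℂ) * f s := by
    apply intervalIntegral.integral_congr
    intro s _
    dsimp only
    rw [inner_eq α ω s hω]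
  rw [hcong]
  rw [norm_mul, norm_pow, Complex.norm_real, Real.norm_eq_abs, abs_of_pos hω]
  -- the bounding function
  set g : ℝ → ℝ := fun s => Real.exp (-(ω*α)) * (2 + Real.exp (ω*s)) / (2*ω) * M with hgdef
  have hgcont : Continuous g := by fun_prop
  have hintg : IntervalIntegrable g MeasureTheory.volume 0 α := hgcont.intervalIntegrable _ _
  have hptwise : ∀ s ∈ Set.Icc (0:ℝ) α,
      ‖((Real.exp (-(ω*α)) * (Real.cos (ω*s) + Real.sin (ω*s) - Real.exp (ω*s)) / (2*ω) : ℝ) : ℂ) * f s‖ ≤ g s := by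
    intro s hs
    rw [norm_mul, Complex.norm_real, Real.norm_eq_abs]
    have h1 : |Real.exp (-(ω*α)) * (Real.cos (ω*s) + Real.sin (ω*s) - Real.exp (ω*s)) / (2*ω)|
        ≤ Real.exp (-(ω*α)) * (2 + Real.exp (ω*s)) / (2*ω) := by
      rw [abs_div, abs_of_pos (by positivity : (0:ℝ) < 2*ω), abs_mul, abs_of_pos (Real.exp_pos _)]
      have habs : |Real.cos (ω*s) + Real.sin (ω*s) - Real.exp (ω*s)| ≤ 2 + Real.exp (ω*s) := by
        rw [abs_le]
        constructor <;>
          nlinarith [Real.cos_le_one (ω*s), Real.neg_one_le_cos (ω*s), Real.sin_le_one (ω*s),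
            Real.neg_one_le_sin (ω*s), Real.exp_pos (ω*s)]
      gcongr
    exact mul_le_mul h1 (hM s hs) (norm_nonneg _) (by positivity)
  -- norm of the outer integral bounded by integral of g
  have hnorm : ‖∫ s in (0:ℝ)..α,
      ((Real.exp (-(ω*α)) * (Real.cos (ω*s) + Real.sin (ω*s) - Real.exp (ω*s)) / (2*ω) : ℝ) : ℂ) * f s‖
      ≤ |∫ s in (0:ℝ)..α, g s| := by
    apply intervalIntegral.norm_integral_le_abs_of_norm_le _ hintg
    apply MeasureTheory.ae_restrict_of_forall_mem measurableSet_uIoc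
    intro s hs
    have hs' : s ∈ Set.Icc (0:ℝ) α := by
      rw [Set.uIoc_of_le hα.le] at hs
      exact ⟨hs.1.le, hs.2⟩
    exact hptwise s hs'
  -- compute the integral of g
  have hgkey : ∀ s : ℝ, HasDerivAt
      (fun s => Real.exp (-(ω*α)) * (2*s + Real.exp (ω*s)/ω) / (2*ω) * M) (g s) s := by
    intro s
    have hlin : HasDerivAt (fun s : ℝ => ω*s) ω s := by
      simpa using (hasDerivAt_id s).const_mul ω
    have he : HasDerivAt (fun s : ℝ => Real.exp (ω*s)) (ω * Real.exp (ω*s)) s := by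
      simpa [mul_comm] using hlin.exp
    have h2 : HasDerivAt (fun s : ℝ => 2*s) 2 s := by
      simpa using (hasDerivAt_id s).const_mul 2
    have := (((h2.add (he.div_const ω)).const_mul (Real.exp (-(ω*α)))).div_const (2*ω)).mul_const M
    refine this.congr_deriv ?_
    simp only [hgdef]
    field_simp
    try ring
  have hgint : (∫ s in (0:ℝ)..α, g s)
      = Real.exp (-(ω*α)) * (2*α + Real.exp (ω*α)/ω) / (2*ω) * M
        - Real.exp (-(ω*α)) * (2*0 + Real.exp (ω*0)/ω) / (2*ω) * M := by
    exact intervalIntegral.integral_eq_sub_of_hasDerivAt (fun s _ => hgkey s)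
      (hgcont.intervalIntegrable _ _)
  have hgnn : (0:ℝ) ≤ ∫ s in (0:ℝ)..α, g s := by
    apply intervalIntegral.integral_nonneg hα.le
    intro s _
    simp only [hgdef]
    positivity
  rw [_root_.abs_of_nonneg hgnn, hgint] at hnorm
  have hfinal : ω^2 * (Real.exp (-(ω*α)) * (2*α + Real.exp (ω*α)/ω) / (2*ω) * M
        - Real.exp (-(ω*α)) * (2*0 + Real.exp (ω*0)/ω) / (2*ω) * M)
      = (α * ω * Real.exp (-(α * ω)) + 1/2 - Real.exp (-(α * ω)) / 2) * M := by
    have h1 : Real.exp (-(ω*α)) = (Real.exp (ω*α))⁻¹ := Real.exp_neg _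
    have h2 : Real.exp (-(α*ω)) = (Real.exp (ω*α))⁻¹ := by rw [mul_comm α ω]; exact Real.exp_neg _
    simp only [mul_zero, Real.exp_zero]; rw [h1, h2]
    have hE : Real.exp (ω*α) ≠ 0 := (Real.exp_pos _).ne'
    field_simp
    ring
  calc ω^2 * ‖_‖ ≤ ω^2 * (Real.exp (-(ω*α)) * (2*α + Real.exp (ω*α)/ω) / (2*ω) * M
        - Real.exp (-(ω*α)) * (2*0 + Real.exp (ω*0)/ω) / (2*ω) * M) := by
        apply mul_le_mul_of_nonneg_left hnorm (by positivity)
    _ = _ := hfinal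
end

section
/- Let λ ≠ 0 be a real number, let α > 0 be a real number, and let z : ℝ → ℂ be differentiable on [0, α] with z'(x) = i·λ·z(x) - cos(λ·(x - α)) for all x ∈ [0, α]. Then for every x ∈ [0, α]: z(x) = z(0)·exp(i·λ·x) - (x/2)·exp(i·λ·(x - α)) - exp(i·λ·α)·sin(λ·x)/(2·λ). -/
open Complex intervalIntegral

private lemma expAux (c : ℂ) (x : ℝ) :
    HasDerivAt (fun t : ℝ => Complex.exp (c * t)) (c * Complex.exp (c * x)) x := by
  have h : HasDerivAt (fun t : ℂ => Complex.exp (c * t)) (c * Complex.exp (c * x)) (x : ℂ) := by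
    simpa [mul_comm] using ((hasDerivAt_id (x:ℂ)).const_mul c).cexp
  exact h.comp_ofReal

/-- Explicit solution of the first-order equation `z' = iλz - cos(λ(x - α))` on `[0, α]`. -/
theorem stmt_19 (lam α : ℝ) (hlam : lam ≠ 0) (hα : 0 < α)
    (z : ℝ → ℂ)
    (hz : ∀ x ∈ Set.Icc (0:ℝ) α,
      HasDerivAt z (Complex.I * (lam:ℂ) * z x - ((Real.cos (lam * (x - α)) : ℝ) : ℂ)) x) :
    ∀ x ∈ Set.Icc (0:ℝ) α,
      z x = z 0 * Complex.exp (Complex.I * ((lam * x : ℝ) : ℂ))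
            - (x:ℂ) / 2 * Complex.exp (Complex.I * ((lam * (x - α) : ℝ) : ℂ))
            - Complex.exp (Complex.I * ((lam * α : ℝ) : ℂ))
                * ((Real.sin (lam * x) : ℝ) : ℂ) / (2 * (lam:ℂ)) := by
  have hlam' : (lam : ℂ) ≠ 0 := Complex.ofReal_ne_zero.mpr hlam
  set c : ℂ := -(Complex.I * (lam:ℂ)) with hc
  set H : ℝ → ℂ := fun t =>
    z t * Complex.exp (c * t)
      + (t:ℂ) / 2 * Complex.exp (-(Complex.I * ((lam * α : ℝ) : ℂ)))
      + Complex.exp (Complex.I * ((lam * α : ℝ) : ℂ)) * ((Real.sin (lam * t) : ℝ) : ℂ)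
          * Complex.exp (c * t) / (2 * (lam:ℂ)) with hH
  have key : ∀ x ∈ Set.Icc (0:ℝ) α, HasDerivAt H 0 x := by
    intro x hx
    have he := expAux c x
    have hsinR : HasDerivAt (fun t : ℝ => Real.sin (lam * t)) (lam * Real.cos (lam * x)) x := by
      exact ((Real.hasDerivAt_sin (lam * x)).comp x
        ((hasDerivAt_id x).const_mul lam)).congr_deriv (by ring)
    have hsin : HasDerivAt (fun t : ℝ => ((Real.sin (lam * t) : ℝ) : ℂ))
        ((lam * Real.cos (lam * x) : ℝ) : ℂ) x := hsinR.ofReal_comp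
    have h1 := (hz x hx).mul he
    have h2 := (((hasDerivAt_id x).ofReal_comp).div_const (2:ℂ)).mul_const
        (Complex.exp (-(Complex.I * ((lam * α : ℝ) : ℂ))))
    have h3 := (((hsin.const_mul (Complex.exp (Complex.I * ((lam * α : ℝ) : ℂ)))).mul
        he).div_const (2 * (lam:ℂ)))
    have hsum := (h1.add h2).add h3
    simp only [id_eq] at hsum
    have hzero :
        ((Complex.I * (lam:ℂ) * z x - ((Real.cos (lam * (x - α)) : ℝ) : ℂ)) * Complex.exp (c * x)
            + z x * (c * Complex.exp (c * x))
          + ((1:ℝ):ℂ) / 2 * Complex.exp (-(Complex.I * ((lam * α : ℝ) : ℂ)))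
          + (Complex.exp (Complex.I * ((lam * α : ℝ) : ℂ)) * ((lam * Real.cos (lam * x) : ℝ) : ℂ)
                * Complex.exp (c * x)
              + Complex.exp (Complex.I * ((lam * α : ℝ) : ℂ)) * ((Real.sin (lam * x) : ℝ) : ℂ)
                * (c * Complex.exp (c * x))) / (2 * (lam:ℂ))) = 0 := by
      set A : ℂ := Complex.exp (Complex.I * ((lam * x : ℝ) : ℂ)) with hA
      set B : ℂ := Complex.exp (Complex.I * ((lam * α : ℝ) : ℂ)) with hB
      have hAne : A ≠ 0 := Complex.exp_ne_zero _
      have hBne : B ≠ 0 := Complex.exp_ne_zero _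
      have e1 : Complex.exp (c * x) = A⁻¹ := by
        rw [← Complex.exp_neg]; congr 1; rw [hc]; push_cast; ring
      have e2 : Complex.exp (-(Complex.I * ((lam * α : ℝ) : ℂ))) = B⁻¹ := by
        rw [← Complex.exp_neg]
      have hcosC : ((Real.cos (lam * (x - α)) : ℝ) : ℂ) = (A * B⁻¹ + A⁻¹ * B) / 2 := by
        rw [Complex.ofReal_cos]
        have h2c := Complex.two_cos (((lam * (x - α) : ℝ) : ℂ))
        have ha1 : Complex.exp (((lam * (x - α) : ℝ) : ℂ) * Complex.I) = A * B⁻¹ := by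
          rw [show (((lam * (x - α) : ℝ) : ℂ) * Complex.I)
              = Complex.I * ((lam * x : ℝ) : ℂ) - Complex.I * ((lam * α : ℝ) : ℂ) by
            push_cast; ring, Complex.exp_sub, div_eq_mul_inv]
        have ha2 : Complex.exp (-(((lam * (x - α) : ℝ) : ℂ)) * Complex.I) = A⁻¹ * B := by
          rw [show (-(((lam * (x - α) : ℝ) : ℂ)) * Complex.I)
              = Complex.I * ((lam * α : ℝ) : ℂ) - Complex.I * ((lam * x : ℝ) : ℂ) by
            push_cast; ring, Complex.exp_sub, div_eq_mul_inv, mul_comm]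
        rw [ha1, ha2] at h2c
        linear_combination h2c / 2
      have hcos2 : ((Real.cos (lam * x) : ℝ) : ℂ) = (A + A⁻¹) / 2 := by
        rw [Complex.ofReal_cos]
        have h2c := Complex.two_cos (((lam * x : ℝ) : ℂ))
        have ha1 : Complex.exp (((lam * x : ℝ) : ℂ) * Complex.I) = A := by
          rw [hA, mul_comm]
        have ha2 : Complex.exp (-((lam * x : ℝ) : ℂ) * Complex.I) = A⁻¹ := by
          rw [← Complex.exp_neg]; congr 1; ring
        rw [ha1, ha2] at h2c
        linear_combination h2c / 2
      have hsin2 : ((Real.sin (lam * x) : ℝ) : ℂ) = (A - A⁻¹) * (-Complex.I) / 2 := by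
        rw [Complex.ofReal_sin]
        have h2s := Complex.two_sin (((lam * x : ℝ) : ℂ))
        have ha1 : Complex.exp (((lam * x : ℝ) : ℂ) * Complex.I) = A := by
          rw [hA, mul_comm]
        have ha2 : Complex.exp (-((lam * x : ℝ) : ℂ) * Complex.I) = A⁻¹ := by
          rw [← Complex.exp_neg]; congr 1; ring
        rw [ha1, ha2] at h2s
        linear_combination h2s / 2
      rw [e1, e2]
      simp only [Complex.ofReal_mul]
      rw [hcosC, hcos2, hsin2, hc]
      field_simp
      ring_nf
      rw [Complex.I_sq]
      field_simp
      simp only [Complex.ofReal_one]; ring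
    rw [hzero] at hsum
    exact hsum
  intro x hx
  have hconst : H x = H 0 := by
    have hle := Convex.norm_image_sub_le_of_norm_hasDerivWithin_le
      (f := H) (f' := fun _ => (0:ℂ)) (s := Set.Icc (0:ℝ) α) (C := 0)
      (fun y hy => (key y hy).hasDerivWithinAt) (fun y _ => by simp)
      (convex_Icc _ _) (Set.left_mem_Icc.mpr hα.le) hx
    have h0 : ‖H x - H 0‖ = 0 := le_antisymm (by simpa using hle) (norm_nonneg _)
    rwa [norm_eq_zero, sub_eq_zero] at h0
  have hH0 : H 0 = z 0 := by simp [hH]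
  rw [hH0] at hconst
  have hconst' : z x * Complex.exp (c * x)
      + (x:ℂ) / 2 * Complex.exp (-(Complex.I * ((lam * α : ℝ) : ℂ)))
      + Complex.exp (Complex.I * ((lam * α : ℝ) : ℂ)) * ((Real.sin (lam * x) : ℝ) : ℂ)
          * Complex.exp (c * x) / (2 * (lam:ℂ)) = z 0 := hconst
  set A : ℂ := Complex.exp (Complex.I * ((lam * x : ℝ) : ℂ)) with hA
  set B : ℂ := Complex.exp (Complex.I * ((lam * α : ℝ) : ℂ)) with hB
  have hAne : A ≠ 0 := Complex.exp_ne_zero _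
  have hBne : B ≠ 0 := Complex.exp_ne_zero _
  have e1 : Complex.exp (c * x) = A⁻¹ := by
    rw [← Complex.exp_neg]; congr 1; rw [hc]; push_cast; ring
  have e2 : Complex.exp (-(Complex.I * ((lam * α : ℝ) : ℂ))) = B⁻¹ := by
    rw [← Complex.exp_neg]
  have e3 : Complex.exp (Complex.I * ((lam * (x - α) : ℝ) : ℂ)) = A * B⁻¹ := by
    rw [show (Complex.I * ((lam * (x - α) : ℝ) : ℂ))
        = Complex.I * ((lam * x : ℝ) : ℂ) - Complex.I * ((lam * α : ℝ) : ℂ) by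
      push_cast; ring, Complex.exp_sub, div_eq_mul_inv]
  rw [e1, e2] at hconst'
  rw [e3]
  have h4 : z x * A⁻¹ = z 0 - (x:ℂ) / 2 * B⁻¹
      - B * ((Real.sin (lam * x) : ℝ) : ℂ) * A⁻¹ / (2 * (lam:ℂ)) := by
    linear_combination hconst'
  have h5 : z x = (z 0 - (x:ℂ) / 2 * B⁻¹
      - B * ((Real.sin (lam * x) : ℝ) : ℂ) * A⁻¹ / (2 * (lam:ℂ))) * A := by
    rw [← h4, mul_assoc, inv_mul_cancel₀ hAne, mul_one]
  rw [h5]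
  field_simp
end
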